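/- arXiv:2011.13708 — 6 statements merged into one kernel-verified Lean document; each statement's English description precedes it below -/
import Mathlib

section
/- Let ρ ≥ 3 and r be primes such that r is a primitive root modulo ρ², and let b ≥ 1 be an integer. If f(x) ∈ ℤ[x] is monic and f(x) ≡ Φ_{ρ^b}(x) (mod r), then f(x) is irreducible over ℚ. -/
open Polynomial IntermediateField

private lemma pow_eq_one_iff_dvd' (r k m : ℕ) (hr : 0 < r) :
    (r : ZMod m) ^ k = 1 ↔ m ∣ r ^ k - 1 := by
  have h1 : 1 ≤ r ^ k := Nat.one_le_pow _ _ hr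
  constructor
  · intro h
    have h2 : ((r ^ k : ℕ) : ZMod m) = ((1 : ℕ) : ZMod m) := by push_cast; simpa using h
    exact (Nat.modEq_iff_dvd' h1).mp ((ZMod.natCast_eq_natCast_iff _ _ _).mp h2).symm
  · intro h
    have h2 : (1 : ℕ) ≡ r ^ k [MOD m] := (Nat.modEq_iff_dvd' h1).mpr h
    have h3 := (ZMod.natCast_eq_natCast_iff _ _ _).mpr h2.symm
    push_cast at h3; simpa using h3

/-- Irreducibility of the cyclotomic polynomial over a finite prime field when the order
of `r` mod `n` is `φ(n)`. -/
private lemma cyclotomic_irreducible_zmod_of_orderOf (n r : ℕ) (hn : 0 < n) (hr : r.Prime)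
    (h : orderOf (r : ZMod n) = n.totient) :
    Irreducible (cyclotomic n (ZMod r)) := by
  haveI : Fact r.Prime := ⟨hr⟩
  set d := n.totient with hd
  have hd0 : d ≠ 0 := (Nat.totient_pos.mpr hn).ne'
  have hr1 : 0 < r := hr.pos
  have hrd1 : 1 ≤ r ^ d := Nat.one_le_pow _ _ hr1
  set F := GaloisField r d with hF
  have hcardF : Nat.card F = r ^ d := GaloisField.card r d hd0
  have hcardU : Nat.card Fˣ = r ^ d - 1 := by rw [Nat.card_units, hcardF]
  have h1 : (r : ZMod n) ^ d = 1 := by rw [← h]; exact pow_orderOf_eq_one _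
  have hnd : n ∣ r ^ d - 1 := (pow_eq_one_iff_dvd' r d n hr1).mp h1
  -- an element of order n in Fˣ
  obtain ⟨g, hg⟩ := IsCyclic.exists_ofOrder_eq_natCard (α := Fˣ)
  rw [hcardU] at hg
  have hgne : orderOf g ≠ 0 := by
    rw [hg]
    have : 2 ≤ r ^ d := by
      calc 2 ≤ r := hr.two_le
      _ = r ^ 1 := (pow_one r).symm
      _ ≤ r ^ d := Nat.pow_le_pow_right hr1 (Nat.one_le_iff_ne_zero.mpr hd0)
    omega
  have hμ : orderOf (g ^ (orderOf g / n)) = n := by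
    refine orderOf_pow_orderOf_div hgne ?_
    rw [hg]; exact hnd
  set μ := g ^ (orderOf g / n) with hμdef
  set x : F := (μ : F) with hx
  have hx_ord : orderOf x = n := by rw [hx, orderOf_units, hμ]
  have hx_prim : IsPrimitiveRoot x n := hx_ord ▸ IsPrimitiveRoot.orderOf x
  have hint : IsIntegral (ZMod r) x := IsIntegral.of_finite _ _
  have hpd : minpoly (ZMod r) x ∣ cyclotomic n (ZMod r) := by
    apply minpoly.dvd
    rw [aeval_def, ← eval_map, map_cyclotomic]
    exact hx_prim.isRoot_cyclotomic hn
  set e := (minpoly (ZMod r) x).natDegree with he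
  have he_pos : 0 < e := minpoly.natDegree_pos hint
  have he_le : e ≤ d := by
    have h2 := Polynomial.natDegree_le_of_dvd hpd (cyclotomic_ne_zero n (ZMod r))
    rwa [natDegree_cyclotomic] at h2
  -- lower bound on e via the field (ZMod r)⟮x⟯
  have hfr : Module.finrank (ZMod r) (ZMod r)⟮x⟯ = e := IntermediateField.adjoin.finrank hint
  letI : Fintype F := Fintype.ofFinite F
  letI : Fintype ((ZMod r)⟮x⟯) := Fintype.ofFinite _
  have hcardE : Fintype.card ((ZMod r)⟮x⟯) = r ^ e := by
    rw [Module.card_eq_pow_finrank (K := ZMod r), ZMod.card, hfr]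
  set y : (ZMod r)⟮x⟯ := IntermediateField.AdjoinSimple.gen (ZMod r) x with hy
  have hyx : (algebraMap ((ZMod r)⟮x⟯) F) y = x := rfl
  have hordy : orderOf y = n := by
    have h2 : orderOf ((algebraMap ((ZMod r)⟮x⟯) F) y) = orderOf y :=
      orderOf_injective ((algebraMap ((ZMod r)⟮x⟯) F)).toMonoidHom (RingHom.injective _) y
    rw [hyx] at h2
    exact h2.symm.trans hx_ord
  have hy0 : y ≠ 0 := by
    intro h0
    apply Units.ne_zero μ
    have hx0 : x = 0 := by rw [← hyx, h0, map_zero]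
    exact hx0
  have hn_dvd : n ∣ r ^ e - 1 := by
    set yu : ((ZMod r)⟮x⟯)ˣ := Units.mk0 y hy0 with hyu
    have h3 : orderOf yu = n := by rw [← hordy, ← orderOf_units]; rfl
    have h4 := orderOf_dvd_natCard yu
    rwa [h3, Nat.card_units, Nat.card_eq_fintype_card, hcardE] at h4
  have hde : d ≤ e := by
    have h5 : (r : ZMod n) ^ e = 1 := (pow_eq_one_iff_dvd' r e n hr1).mpr hn_dvd
    have h6 : d ∣ e := h ▸ orderOf_dvd_of_pow_eq_one h5
    exact Nat.le_of_dvd he_pos h6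
  have heq : cyclotomic n (ZMod r) = minpoly (ZMod r) x := by
    apply eq_of_monic_of_dvd_of_natDegree_le (minpoly.monic hint) (cyclotomic.monic n _) hpd
    rw [natDegree_cyclotomic]; omega
  rw [heq]
  exact minpoly.irreducible hint

theorem monic_congr_cyclotomic_irreducible (ρ r : ℕ) (hρ : ρ.Prime) (hρ3 : 3 ≤ ρ)
    (hr : r.Prime) (hprim : orderOf (r : ZMod (ρ ^ 2)) = (ρ ^ 2).totient)
    (b : ℕ) (hb : 1 ≤ b) (f : Polynomial ℤ) (hf : f.Monic)
    (hcong : f.map (Int.castRingHom (ZMod r)) = Polynomial.cyclotomic (ρ ^ b) (ZMod r)) :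
    Irreducible (f.map (Int.castRingHom ℚ)) := by
  haveI : Fact ρ.Prime := ⟨hρ⟩
  have hρ0 : 0 < ρ := hρ.pos
  have hr0 : 0 < r := hr.pos
  have hodd : Odd ρ := hρ.odd_of_ne_two (by omega)
  have htot2 : (ρ ^ 2).totient = ρ * (ρ - 1) := by
    rw [Nat.totient_prime_pow hρ (by norm_num)]; ring_nf
  -- r is not divisible by ρ
  have hrρ : ¬ ρ ∣ r := by
    have ht0 : (ρ ^ 2).totient ≠ 0 := (Nat.totient_pos.mpr (by positivity)).ne'
    have hone : (r : ZMod (ρ ^ 2)) ^ (ρ ^ 2).totient = 1 := by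
      rw [← hprim]; exact pow_orderOf_eq_one _
    have hu : IsUnit (r : ZMod (ρ ^ 2)) := IsUnit.of_pow_eq_one hone ht0
    have hco : Nat.Coprime r (ρ ^ 2) := (ZMod.isUnit_iff_coprime r (ρ ^ 2)).mp hu
    intro hdvd
    have : ρ ∣ Nat.gcd r (ρ ^ 2) := Nat.dvd_gcd hdvd (dvd_pow_self ρ (by norm_num))
    rw [hco] at this
    have := Nat.le_of_dvd one_pos this
    omega
  haveI : Fact r.Prime := ⟨hr⟩
  have hrne : (r : ZMod ρ) ≠ 0 := by
    intro h0
    exact hrρ ((ZMod.natCast_eq_zero_iff r ρ).mp h0)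
  have hferm : ρ ∣ r ^ (ρ - 1) - 1 :=
    (pow_eq_one_iff_dvd' r (ρ - 1) ρ hr0).mp (ZMod.pow_card_sub_one_eq_one hrne)
  have hnotsq : ¬ ρ ^ 2 ∣ r ^ (ρ - 1) - 1 := by
    intro hdvd
    have h1 : (r : ZMod (ρ ^ 2)) ^ (ρ - 1) = 1 :=
      (pow_eq_one_iff_dvd' r (ρ - 1) (ρ ^ 2) hr0).mpr hdvd
    have h2 : (ρ ^ 2).totient ∣ ρ - 1 := hprim ▸ orderOf_dvd_of_pow_eq_one h1
    rw [htot2] at h2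
    have h3 := Nat.le_of_dvd (by omega) h2
    have h5 : 2 * (ρ - 1) ≤ ρ * (ρ - 1) := Nat.mul_le_mul_right _ (by omega)
    omega
  have hmult1 : emultiplicity ρ (r ^ (ρ - 1) - 1) = ((1 : ℕ) : ℕ∞) :=
    emultiplicity_eq_coe.mpr ⟨by simpa using hferm, by simpa using hnotsq⟩
  have hnr_pow : ∀ k : ℕ, ¬ ρ ∣ r ^ k := fun k hd => hrρ (hρ.dvd_of_dvd_pow hd)
  have hnotunit : ¬ IsUnit ρ := by
    rw [Nat.isUnit_iff]; omega
  have hkey : ∀ j : ℕ, emultiplicity ρ (r ^ ((ρ - 1) * ρ ^ j) - 1) = ((j + 1 : ℕ) : ℕ∞) := by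
    intro j
    have hlte := Nat.emultiplicity_pow_sub_pow hρ hodd (x := r ^ (ρ - 1)) (y := 1)
      (by simpa using hferm) (hnr_pow _) (ρ ^ j)
    rw [one_pow, ← pow_mul] at hlte
    rw [hlte, hmult1, emultiplicity_pow_self hρ.ne_zero hnotunit, ← Nat.cast_add,
      Nat.add_comm]
  have hordρ : orderOf (r : ZMod ρ) = ρ - 1 := by
    set e := orderOf (r : ZMod ρ) with he
    have he_dvd : e ∣ ρ - 1 := orderOf_dvd_of_pow_eq_one (ZMod.pow_card_sub_one_eq_one hrne)
    have hre : ρ ∣ r ^ e - 1 :=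
      (pow_eq_one_iff_dvd' r e ρ hr0).mp (pow_orderOf_eq_one _)
    have hlte := Nat.emultiplicity_pow_sub_pow hρ hodd (x := r ^ e) (y := 1)
      (by simpa using hre) (hnr_pow _) ρ
    rw [one_pow, ← pow_mul] at hlte
    have h2le : ((2 : ℕ) : ℕ∞) ≤ emultiplicity ρ (r ^ (e * ρ) - 1) := by
      rw [hlte]
      have a1 : ((1 : ℕ) : ℕ∞) ≤ emultiplicity ρ (r ^ e - 1) :=
        le_emultiplicity_of_pow_dvd (by simpa using hre)
      have a2 : ((1 : ℕ) : ℕ∞) ≤ emultiplicity ρ ρ :=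
        le_emultiplicity_of_pow_dvd (by simp)
      calc ((2 : ℕ) : ℕ∞) = ((1 : ℕ) : ℕ∞) + ((1 : ℕ) : ℕ∞) := by norm_num
      _ ≤ _ := add_le_add a1 a2
    have hsq : ρ ^ 2 ∣ r ^ (e * ρ) - 1 := pow_dvd_of_le_emultiplicity h2le
    have h1 : (r : ZMod (ρ ^ 2)) ^ (e * ρ) = 1 :=
      (pow_eq_one_iff_dvd' r (e * ρ) (ρ ^ 2) hr0).mpr hsq
    have h2 : ρ * (ρ - 1) ∣ e * ρ := htot2 ▸ hprim ▸ orderOf_dvd_of_pow_eq_one h1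
    have h3 : (ρ - 1) ∣ e := by
      rw [mul_comm e ρ] at h2
      exact (Nat.mul_dvd_mul_iff_left hρ0).mp h2
    exact Nat.dvd_antisymm he_dvd h3
  have hord : orderOf (r : ZMod (ρ ^ b)) = (ρ ^ b).totient := by
    set t := orderOf (r : ZMod (ρ ^ b)) with ht
    have htot : (ρ ^ b).totient = ρ ^ (b - 1) * (ρ - 1) := Nat.totient_prime_pow hρ hb
    have hu : IsUnit (r : ZMod (ρ ^ b)) := (ZMod.isUnit_iff_coprime r (ρ ^ b)).mpr
      (((Nat.Prime.coprime_iff_not_dvd hρ).mpr hrρ).symm.pow_right b)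
    have ht_dvd : t ∣ (ρ ^ b).totient := by
      apply orderOf_dvd_of_pow_eq_one
      have hup := ZMod.pow_totient hu.unit
      calc (r : ZMod (ρ ^ b)) ^ (ρ ^ b).totient
          = ((hu.unit ^ (ρ ^ b).totient : (ZMod (ρ ^ b))ˣ) : ZMod (ρ ^ b)) := by
            rw [Units.val_pow_eq_pow_val, IsUnit.unit_spec]
      _ = 1 := by rw [hup]; rfl
    have hρ1t : (ρ - 1) ∣ t := by
      have hmap := orderOf_map_dvd
        (ZMod.castHom (dvd_pow_self ρ (by omega : b ≠ 0)) (ZMod ρ)).toMonoidHom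
        (r : ZMod (ρ ^ b))
      rw [RingHom.toMonoidHom_eq_coe, MonoidHom.coe_coe, map_natCast] at hmap
      rwa [hordρ] at hmap
    obtain ⟨s, hs⟩ := hρ1t
    have hs_dvd : s ∣ ρ ^ (b - 1) := by
      have h4 : (ρ - 1) * s ∣ (ρ - 1) * ρ ^ (b - 1) := by
        rw [← hs]
        rw [htot, mul_comm (ρ ^ (b - 1))] at ht_dvd
        exact ht_dvd
      exact (Nat.mul_dvd_mul_iff_left (by omega : 0 < ρ - 1)).mp h4
    obtain ⟨j, hj, hjs⟩ := (Nat.dvd_prime_pow hρ).mp hs_dvd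
    have hdt : ρ ^ b ∣ r ^ t - 1 :=
      (pow_eq_one_iff_dvd' r t (ρ ^ b) hr0).mp (pow_orderOf_eq_one _)
    rw [hs, hjs] at hdt
    have hble : ((b : ℕ) : ℕ∞) ≤ ((j + 1 : ℕ) : ℕ∞) := by
      rw [← hkey j]
      exact le_emultiplicity_of_pow_dvd hdt
    have hble' : b ≤ j + 1 := by exact_mod_cast hble
    have hj' : j = b - 1 := by omega
    rw [hs, hjs, hj', htot, mul_comm]
  have hirr : Irreducible (cyclotomic (ρ ^ b) (ZMod r)) :=
    cyclotomic_irreducible_zmod_of_orderOf (ρ ^ b) r (by positivity) hr hord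
  rw [← hcong] at hirr
  have hirrZ : Irreducible f := hf.irreducible_of_irreducible_map _ _ hirr
  exact (Polynomial.IsPrimitive.Int.irreducible_iff_irreducible_map_cast hf.isPrimitive).mp hirrZ
end

section
/- Let N ≥ 2 and let P(x) = Σ_{j=0}^N c_j x^j ∈ ℝ[x] be a reciprocal polynomial (meaning P(x) = x^N P(1/x)) with c_N ≠ 0. Suppose there exists δ ∈ ℝ with c_N δ ≥ 0 and |c_N| ≥ |δ| such that |c_N + δ| ≥ Σ_{j=1}^{N-1} |c_j + δ − c_N|. Then every complex zero of P has modulus 1. -/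
open Polynomial

noncomputable def auxF (N : ℕ) (c : ℕ → ℝ) : ℝ → ℝ :=
  fun t => ∑ j ∈ Finset.range (N+1), c j * Real.cos ((2*(j:ℝ) - N) * t)

lemma aux_cos_nat_pi (k : ℕ) : Real.cos (k * Real.pi) = (-1)^k := by
  induction k with
  | zero => simp
  | succ n ih =>
    have h : ((n+1:ℕ):ℝ) * Real.pi = n * Real.pi + Real.pi := by push_cast; ring
    rw [h, Real.cos_add_pi, ih, pow_succ]; ring

lemma aux_prod_ge (d : ℝ) (hd : 0 ≤ d) (M : Multiset ℝ) (h : ∀ x ∈ M, d ≤ x) :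
    d ^ Multiset.card M ≤ M.prod := by
  induction M using Multiset.induction_on with
  | empty => simp
  | cons a s ih =>
    have ha : d ≤ a := h a (Multiset.mem_cons_self a s)
    have hs : ∀ x ∈ s, d ≤ x := fun x hx => h x (Multiset.mem_cons_of_mem hx)
    simp only [Multiset.prod_cons, Multiset.card_cons, pow_succ]
    calc d ^ Multiset.card s * d ≤ s.prod * a := by
          apply mul_le_mul (ih hs) ha hd
          exact Multiset.prod_nonneg fun x hx => hd.trans (hs x hx)
      _ = a * s.prod := mul_comm _ _

lemma aux_sin_sum_zero (N : ℕ) (b : ℕ → ℝ) (hb : ∀ j ≤ N, b j = b (N - j)) (t : ℝ) :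
    ∑ j ∈ Finset.range (N+1), b j * Real.sin ((2*(j:ℝ) - N) * t) = 0 := by
  have h := Finset.sum_range_reflect (fun j => b j * Real.sin ((2*(j:ℝ) - N) * t)) (N+1)
  have h2 : ∀ j ∈ Finset.range (N+1),
      b (N + 1 - 1 - j) * Real.sin ((2*((N + 1 - 1 - j:ℕ):ℝ) - N) * t)
        = -(b j * Real.sin ((2*(j:ℝ) - N) * t)) := by
    intro j hj
    have hjN : j ≤ N := Nat.lt_succ_iff.mp (Finset.mem_range.mp hj)
    have e1 : N + 1 - 1 - j = N - j := by omega
    have e2 : ((N - j:ℕ):ℝ) = (N:ℝ) - j := by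
      rw [Nat.cast_sub hjN]
    rw [e1, e2, ← hb j hjN]
    have e3 : (2*((N:ℝ) - j) - N) * t = -((2*(j:ℝ) - N) * t) := by ring
    rw [e3, Real.sin_neg]; ring
  rw [Finset.sum_congr rfl h2] at h
  rw [Finset.sum_neg_distrib] at h
  linarith

lemma aux_ivt (f : ℝ → ℝ) (hf : Continuous f) (a b : ℝ) (hab : a < b)
    (h : f a * f b < 0) : ∃ c ∈ Set.Ioo a b, f c = 0 := by
  rcases mul_neg_iff.mp h with ⟨ha, hb⟩ | ⟨ha, hb⟩
  · have hmem : (0:ℝ) ∈ Set.Ioo (f b) (f a) := ⟨hb, ha⟩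
    obtain ⟨c, hc, hc0⟩ := intermediate_value_Ioo' hab.le hf.continuousOn hmem
    exact ⟨c, hc, hc0⟩
  · have hmem : (0:ℝ) ∈ Set.Ioo (f a) (f b) := ⟨ha, hb⟩
    obtain ⟨c, hc, hc0⟩ := intermediate_value_Ioo hab.le hf.continuousOn hmem
    exact ⟨c, hc, hc0⟩

lemma aux_cos_sum (N k : ℕ) (hk0 : 0 < k) (hkN : k < N) :
    ∑ j ∈ Finset.Ico 1 N, Real.cos (2*Real.pi*j*k/N) = -1 := by
  have hNpos : 0 < N := lt_trans hk0 hkN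
  have hN0 : (N:ℝ) ≠ 0 := Nat.cast_ne_zero.mpr hNpos.ne'
  set x : ℝ := 2*Real.pi*k/N with hx
  set w : ℂ := Complex.exp (x * Complex.I) with hw
  have hw1 : w ≠ 1 := by
    rw [hw, Ne, Complex.exp_eq_one_iff]
    rintro ⟨n, hn⟩
    have him := congrArg Complex.im hn
    simp only [Complex.mul_im, Complex.ofReal_re, Complex.I_im, Complex.ofReal_im,
      Complex.I_re, mul_zero, mul_one, zero_mul, add_zero] at him
    -- him : x = n * (2 * π)
    have him' : x = (n:ℝ) * (2 * Real.pi) := by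
      have := hn
      have : ((x:ℂ) * Complex.I).im = ((n:ℂ) * (2 * (Real.pi:ℂ) * Complex.I)).im := by rw [hn]
      simpa using this
    have hπ := Real.pi_pos
    have hkn : (k:ℝ) = n * N := by
      rw [hx, div_eq_iff hN0] at him'
      have h2 : (2*Real.pi) * ((k:ℝ) - n*N) = 0 := by linear_combination him'
      rcases mul_eq_zero.mp h2 with h | h
      · linarith
      · linarith
    have hk0' : (0:ℝ) < k := by exact_mod_cast hk0
    have hkN' : (k:ℝ) < N := by exact_mod_cast hkN
    have hN' : (0:ℝ) < N := by exact_mod_cast hNpos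
    rcases le_or_gt (n:ℝ) 0 with hn0 | hn0
    · nlinarith
    · have : (1:ℝ) ≤ n := by exact_mod_cast hn0
      nlinarith
  have hwN : w ^ N = 1 := by
    rw [hw, ← Complex.exp_nat_mul]
    have : (N:ℂ) * (x * Complex.I) = (k:ℤ) * (2 * Real.pi * Complex.I) := by
      rw [hx]
      push_cast
      have : (N:ℂ) ≠ 0 := Nat.cast_ne_zero.mpr hNpos.ne'
      field_simp
    rw [this, Complex.exp_int_mul_two_pi_mul_I]
  have hgeom : ∑ j ∈ Finset.range N, w ^ j = 0 := by
    rw [geom_sum_eq hw1, hwN, sub_self, zero_div]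
  have hre : ∀ j : ℕ, (w ^ j).re = Real.cos (2*Real.pi*j*k/N) := by
    intro j
    rw [hw, ← Complex.exp_nat_mul]
    have : (j:ℂ) * (x * Complex.I) = ((2*Real.pi*j*k/N : ℝ):ℂ) * Complex.I := by
      rw [hx]; push_cast; ring
    rw [this, Complex.exp_ofReal_mul_I_re]
  have hsum : ∑ j ∈ Finset.range N, Real.cos (2*Real.pi*j*k/N) = 0 := by
    have := congrArg Complex.re hgeom
    rw [Complex.re_sum] at this
    simpa [hre] using this
  have hsplit := Finset.sum_eq_sum_Ico_succ_bot hNpos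
    (fun j => Real.cos (2*Real.pi*j*k/N))
  rw [Finset.range_eq_Ico] at hsum
  rw [hsplit] at hsum
  simp only [Nat.cast_zero, mul_zero, zero_mul, zero_div, Real.cos_zero] at hsum
  have : Real.cos (2*Real.pi*(0:ℕ)*k/N) = 1 := by norm_num
  linarith [hsum, this]

lemma aux_key_identity (N : ℕ) (R : Polynomial ℝ) (hdeg : R.natDegree = N)
    (hpal : ∀ j ≤ N, R.coeff j = R.coeff (N - j)) (t : ℝ) :
    Polynomial.eval (Complex.exp ((2*t:ℝ) * Complex.I)) (R.map (algebraMap ℝ ℂ))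
      = Complex.exp ((N*t:ℝ) * Complex.I) * ((auxF N R.coeff t : ℝ) : ℂ) := by
  rw [Polynomial.eval_map, Polynomial.eval₂_eq_sum_range, hdeg]
  have hterm : ∀ i ∈ Finset.range (N+1),
      (algebraMap ℝ ℂ) (R.coeff i) * Complex.exp (((2*t:ℝ):ℂ) * Complex.I) ^ i
      = Complex.exp (((N*t:ℝ):ℂ)*Complex.I) * ((R.coeff i * Real.cos ((2*(i:ℝ)-N)*t) : ℝ):ℂ)
        + Complex.exp (((N*t:ℝ):ℂ)*Complex.I) * Complex.I *
          ((R.coeff i * Real.sin ((2*(i:ℝ)-N)*t) : ℝ):ℂ) := by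
    intro i _
    rw [← Complex.exp_nat_mul]
    have e1 : (i:ℂ) * (((2*t:ℝ):ℂ) * Complex.I)
        = ((N*t:ℝ):ℂ)*Complex.I + (((2*(i:ℝ)-N)*t : ℝ):ℂ) * Complex.I := by
      push_cast; ring
    rw [e1, Complex.exp_add]
    set w := Complex.exp (((N*t:ℝ):ℂ) * Complex.I) with hw
    rw [Complex.exp_mul_I, ← Complex.ofReal_cos, ← Complex.ofReal_sin]
    have : (algebraMap ℝ ℂ) (R.coeff i) = ((R.coeff i : ℝ) : ℂ) := rfl
    rw [this]
    push_cast
    ring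
  rw [Finset.sum_congr rfl hterm, Finset.sum_add_distrib, ← Finset.mul_sum, ← Finset.mul_sum,
    ← Complex.ofReal_sum, ← Complex.ofReal_sum,
    aux_sin_sum_zero N R.coeff hpal t]
  simp [auxF]

lemma aux_roots_on_circle (N : ℕ) (hN : 0 < N) (R : Polynomial ℝ)
    (hdeg : R.natDegree = N) (hlc : R.coeff N ≠ 0)
    (hpal : ∀ j ≤ N, R.coeff j = R.coeff (N - j))
    (ε : ℝ)
    (hsign : ∀ k ≤ N, 0 < ε * ((-1:ℝ)^k * auxF N R.coeff ((k:ℝ)*Real.pi/N))) :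
    ∀ z ∈ (R.map (algebraMap ℝ ℂ)).roots, ‖z‖ = 1 := by
  have hπ := Real.pi_pos
  have hN' : (0:ℝ) < N := by exact_mod_cast hN
  have hFcont : Continuous (auxF N R.coeff) := by
    apply continuous_finset_sum
    intro j _
    exact continuous_const.mul (Real.continuous_cos.comp (continuous_const.mul continuous_id))
  -- zeros in each interval
  have hzero : ∀ k : ℕ, k < N →
      ∃ c ∈ Set.Ioo ((k:ℝ)*Real.pi/N) (((k+1:ℕ):ℝ)*Real.pi/N), auxF N R.coeff c = 0 := by
    intro k hk
    have hab : (k:ℝ)*Real.pi/N < ((k+1:ℕ):ℝ)*Real.pi/N := by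
      rw [div_lt_div_iff₀ hN' hN']
      push_cast
      nlinarith
    apply aux_ivt _ hFcont _ _ hab
    have h1 := hsign k (le_of_lt hk)
    have h2 := hsign (k+1) hk
    have hp := mul_pos h1 h2
    have hsq : ((-1:ℝ)^k)^2 = 1 := by
      rw [← pow_mul, mul_comm, pow_mul]; norm_num
    have hε : ε ≠ 0 := by
      intro h; rw [h] at h1; simp at h1
    have hε2 : 0 < ε^2 := by positivity
    have he : ε * ((-1:ℝ)^k * auxF N R.coeff ((k:ℝ)*Real.pi/N)) *
        (ε * ((-1:ℝ)^(k+1) * auxF N R.coeff (((k+1:ℕ):ℝ)*Real.pi/N)))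
        = -(ε^2 * (((-1:ℝ)^k)^2 *
          (auxF N R.coeff ((k:ℝ)*Real.pi/N) * auxF N R.coeff (((k+1:ℕ):ℝ)*Real.pi/N)))) := by
      rw [pow_succ]; ring
    rw [he, hsq] at hp
    by_contra hcon
    push_neg at hcon
    nlinarith [mul_nonneg hε2.le hcon]
  -- choose zeros
  have hch : ∀ k : Fin N, ∃ c, c ∈ Set.Ioo ((k.1:ℝ)*Real.pi/N) (((k.1+1:ℕ):ℝ)*Real.pi/N) ∧
      auxF N R.coeff c = 0 := by
    intro k
    obtain ⟨c, hc1, hc2⟩ := hzero k.1 k.2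
    exact ⟨c, hc1, hc2⟩
  choose τ hτmem hτzero using hch
  have hτpos : ∀ k : Fin N, 0 < τ k := by
    intro k
    have := (hτmem k).1
    have h0 : (0:ℝ) ≤ (k.1:ℝ)*Real.pi/N := by positivity
    linarith
  have hτlt : ∀ k : Fin N, τ k < Real.pi := by
    intro k
    have := (hτmem k).2
    have h0 : ((k.1+1:ℕ):ℝ)*Real.pi/N ≤ Real.pi := by
      rw [div_le_iff₀ hN']
      have : ((k.1+1:ℕ):ℝ) ≤ N := by exact_mod_cast k.2
      nlinarith
    linarith
  have hτmono : ∀ u v : Fin N, u < v → τ u < τ v := by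
    intro u v huv
    have h1 := (hτmem u).2
    have h2 := (hτmem v).1
    have h3 : ((u.1+1:ℕ):ℝ)*Real.pi/N ≤ ((v.1:ℝ))*Real.pi/N := by
      have : ((u.1+1:ℕ):ℝ) ≤ (v.1:ℝ) := by exact_mod_cast huv
      rw [div_le_div_iff₀ hN' hN']
      nlinarith [mul_le_mul_of_nonneg_right this (mul_nonneg hπ.le hN'.le)]
    linarith
  set r : Fin N → ℂ := fun k => Complex.exp ((2 * τ k:ℝ) * Complex.I) with hr
  have hmain : ∀ u v : Fin N, τ u < τ v → r u = r v → False := by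
    intro u v huv he
    rw [hr] at he
    simp only at he
    rw [Complex.exp_eq_exp_iff_exists_int] at he
    obtain ⟨n, hn⟩ := he
    have him : 2 * τ u = 2 * τ v + (n:ℝ) * (2*Real.pi) := by
      have h := congrArg Complex.im hn
      simpa using h
    have hlt : (n:ℝ) * (2*Real.pi) < 0 := by linarith
    have hgt : -(2*Real.pi) < (n:ℝ) * (2*Real.pi) := by
      have := hτpos u
      have := hτlt v
      linarith
    have hn1 : (n:ℝ) < 0 := by nlinarith
    have hn2 : (-1:ℝ) < (n:ℝ) := by nlinarith
    have hn1' : n < 0 := by exact_mod_cast hn1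
    have hn2' : (-1:ℤ) < n := by exact_mod_cast hn2
    omega
  have hrinj : Function.Injective r := by
    intro u v he
    rcases lt_trichotomy u v with h | h | h
    · exact absurd he (fun he => (hmain u v (hτmono u v h) he).elim)
    · exact h
    · exact absurd he (fun he => (hmain v u (hτmono v u h) he.symm).elim)
  set Q := R.map (algebraMap ℝ ℂ) with hQ
  have hQcoeff : Q.coeff N = ((R.coeff N : ℝ) : ℂ) := by
    rw [hQ, Polynomial.coeff_map]; rfl
  have hQ0 : Q ≠ 0 := by
    intro h
    apply hlc
    have h2 : Q.coeff N = 0 := by rw [h]; simp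
    rw [hQcoeff] at h2
    exact_mod_cast h2
  have hQdeg : Q.natDegree = N := by
    rw [hQ, Polynomial.natDegree_map_eq_of_injective (algebraMap ℝ ℂ).injective, hdeg]
  have hroot : ∀ k : Fin N, r k ∈ Q.roots := by
    intro k
    rw [Polynomial.mem_roots hQ0]
    have := aux_key_identity N R hdeg hpal (τ k)
    show Polynomial.IsRoot Q (r k)
    unfold Polynomial.IsRoot
    rw [hr]
    simp only
    rw [← hQ] at this
    rw [this, hτzero k]
    simp
  have habs1 : ∀ k : Fin N, ‖r k‖ = 1 := by
    intro k
    rw [hr]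
    simp [Complex.norm_exp]
  have hTnodup : (Multiset.map r Finset.univ.val).Nodup :=
    Multiset.Nodup.map hrinj Finset.univ.nodup
  have hTsub : (Multiset.map r Finset.univ.val) ⊆ Q.roots := by
    intro a ha
    obtain ⟨k, _, rfl⟩ := Multiset.mem_map.mp ha
    exact hroot k
  have hle : (Multiset.map r Finset.univ.val) ≤ Q.roots :=
    (Multiset.le_iff_subset hTnodup).mpr hTsub
  have hcardroots : Multiset.card Q.roots = N := by
    rw [Polynomial.splits_iff_card_roots.mp (IsAlgClosed.splits _), hQdeg]
  have hTcard : Multiset.card (Multiset.map r Finset.univ.val) = N := by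
    simp
  have heq : (Multiset.map r Finset.univ.val) = Q.roots :=
    Multiset.eq_of_le_of_card_le hle (by rw [hcardroots, hTcard])
  intro z hz
  rw [← heq] at hz
  obtain ⟨k, _, rfl⟩ := Multiset.mem_map.mp hz
  exact habs1 k

set_option maxHeartbeats 4000000 in
theorem reciprocal_poly_zeros_on_unit_circle (N : ℕ) (hN : 2 ≤ N) (P : Polynomial ℝ)
    (hdeg : P.natDegree = N) (hcN : P.coeff N ≠ 0)
    (hrecip : ∀ j ≤ N, P.coeff j = P.coeff (N - j))
    (δ : ℝ) (hδ1 : P.coeff N * δ ≥ 0) (hδ2 : |P.coeff N| ≥ |δ|)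
    (hδ3 : |P.coeff N + δ| ≥ ∑ j ∈ Finset.Ico 1 N, |P.coeff j + δ - P.coeff N|) :
    ∀ z : ℂ, Polynomial.aeval z P = 0 → ‖z‖ = 1 := by
  intro z hz
  by_contra habs
  have hπ := Real.pi_pos
  have hNpos : 0 < N := by omega
  have hN' : (0:ℝ) < N := by exact_mod_cast hNpos
  have hN2 : (2:ℝ) ≤ N := by exact_mod_cast hN
  have ha : 0 < |P.coeff N| := abs_pos.mpr hcN
  have hab : |P.coeff N + δ| = |P.coeff N| + |δ| := by
    rcases hcN.lt_or_gt with hc | hc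
    · have hδ0 : δ ≤ 0 := by
        by_contra h
        push_neg at h
        nlinarith
      rw [abs_of_nonpos (by linarith), abs_of_neg hc, abs_of_nonpos hδ0]
      ring
    · have hδ0 : 0 ≤ δ := by
        by_contra h
        push_neg at h
        nlinarith
      rw [abs_of_nonneg (by linarith), abs_of_pos hc, abs_of_nonneg hδ0]
  have hsum : ∑ j ∈ Finset.Ico 1 N, |P.coeff j + δ - P.coeff N| ≤ |P.coeff N| + |δ| := by
    rw [← hab]; exact hδ3
  have hcd : P.coeff N * δ = |P.coeff N| * |δ| := by
    rw [← abs_mul]; exact (abs_of_nonneg hδ1).symm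
  have hsq : P.coeff N * P.coeff N = |P.coeff N| * |P.coeff N| := by
    rw [← abs_mul, abs_mul_self]
  obtain ⟨d, hdd⟩ : ∃ x, x = |‖z‖ - 1| := ⟨_, rfl⟩
  have hd : 0 < d := by
    rw [hdd, abs_pos, sub_ne_zero]; exact habs
  obtain ⟨E, hE⟩ : ∃ x : Polynomial ℝ, x = ∑ j ∈ Finset.Ico 1 N,
    Polynomial.C (P.coeff j + δ - P.coeff N) * Polynomial.X ^ j := ⟨_, rfl⟩
  obtain ⟨A, hA⟩ : ∃ x, x = ‖Polynomial.aeval z E‖ := ⟨_, rfl⟩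
  have hA0 : 0 ≤ A := by rw [hA]; exact norm_nonneg _
  obtain ⟨ε0, hε0def⟩ : ∃ x, x = |P.coeff N| * d^N / (A + 1) := ⟨_, rfl⟩
  have hε0 : 0 < ε0 := by rw [hε0def]; positivity
  obtain ⟨s, hs⟩ : ∃ x, x = 1 - min ε0 1 / 2 := ⟨_, rfl⟩
  have hmin0 : 0 < min ε0 1 := lt_min hε0 one_pos
  have hmin1 : min ε0 1 ≤ 1 := min_le_right _ _
  have hs0 : 0 ≤ s := by rw [hs]; linarith
  have hs1 : s < 1 := by rw [hs]; linarith
  obtain ⟨Ps, hPs⟩ : ∃ x : Polynomial ℝ, x = P - Polynomial.C (1-s) * E := ⟨_, rfl⟩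
  have hEco : ∀ m : ℕ, E.coeff m
      = if m ∈ Finset.Ico 1 N then (P.coeff m + δ - P.coeff N) else 0 := by
    intro m
    rw [hE, Polynomial.finset_sum_coeff]
    simp only [Polynomial.coeff_C_mul_X_pow]
    rw [Finset.sum_ite_eq (Finset.Ico 1 N) m (fun j => P.coeff j + δ - P.coeff N)]
  have hPsco : ∀ m : ℕ, Ps.coeff m = P.coeff m
      - (1-s) * (if m ∈ Finset.Ico 1 N then (P.coeff m + δ - P.coeff N) else 0) := by
    intro m
    rw [hPs, Polynomial.coeff_sub, Polynomial.coeff_C_mul, hEco]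
  have hPsN : Ps.coeff N = P.coeff N := by
    rw [hPsco]; simp [Finset.mem_Ico]
  have hP0 : P.coeff 0 = P.coeff N := by
    have := hrecip 0 (Nat.zero_le N); simpa using this
  have hPs0 : Ps.coeff 0 = P.coeff N := by
    rw [hPsco]; simp [Finset.mem_Ico, hP0]
  have hPspal : ∀ j ≤ N, Ps.coeff j = Ps.coeff (N - j) := by
    intro j hj
    rw [hPsco, hPsco]
    have hmem : j ∈ Finset.Ico 1 N ↔ (N - j) ∈ Finset.Ico 1 N := by
      simp only [Finset.mem_Ico]; omega
    have hcj : P.coeff j = P.coeff (N - j) := hrecip j hj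
    by_cases hm : j ∈ Finset.Ico 1 N
    · rw [if_pos hm, if_pos (hmem.mp hm), hcj]
    · rw [if_neg hm, if_neg (fun h => hm (hmem.mpr h))]
      simp [hcj]
  have hPsdeg : Ps.natDegree = N := by
    apply le_antisymm
    · rw [hPs]
      apply le_trans (Polynomial.natDegree_sub_le _ _)
      simp only [sup_le_iff]
      refine ⟨le_of_eq hdeg, ?_⟩
      apply le_trans (Polynomial.natDegree_C_mul_le _ _)
      rw [hE]
      apply Polynomial.natDegree_sum_le_of_forall_le
      intro j hj
      apply le_trans (Polynomial.natDegree_C_mul_X_pow_le _ _)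
      exact le_of_lt (Finset.mem_Ico.mp hj).2
    · exact Polynomial.le_natDegree_of_ne_zero (by rw [hPsN]; exact hcN)
  -- node sign condition
  have hsign : ∀ k ≤ N, 0 < P.coeff N *
      ((-1:ℝ)^k * auxF N Ps.coeff ((k:ℝ)*Real.pi/N)) := by
    intro k hk
    have hnode : auxF N Ps.coeff ((k:ℝ)*Real.pi/N)
        = (-1:ℝ)^k * ∑ j ∈ Finset.range (N+1),
            Ps.coeff j * Real.cos (2*Real.pi*j*k/N) := by
      rw [auxF, Finset.mul_sum]
      apply Finset.sum_congr rfl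
      intro j _
      have harg : (2*(j:ℝ) - N) * ((k:ℝ)*Real.pi/N)
          = 2*Real.pi*j*k/N - k*Real.pi := by
        field_simp
      rw [harg, Real.cos_sub, aux_cos_nat_pi, Real.sin_nat_mul_pi]
      ring
    have hsgnsq : ((-1:ℝ)^k) * ((-1:ℝ)^k) = 1 := by
      rw [← pow_add, ← two_mul, pow_mul]; norm_num
    rw [hnode]
    have hgoal : P.coeff N * ((-1:ℝ)^k * ((-1:ℝ)^k *
        ∑ j ∈ Finset.range (N+1), Ps.coeff j * Real.cos (2*Real.pi*j*k/N)))
        = P.coeff N * ∑ j ∈ Finset.range (N+1),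
            Ps.coeff j * Real.cos (2*Real.pi*j*k/N) := by
      rw [← mul_assoc ((-1:ℝ)^k), hsgnsq, one_mul]
    rw [hgoal]
    -- split the sum
    have hsplit : ∑ j ∈ Finset.range (N+1), Ps.coeff j * Real.cos (2*Real.pi*j*k/N)
        = Ps.coeff 0 * Real.cos (2*Real.pi*(0:ℕ)*k/N)
          + ∑ j ∈ Finset.Ico 1 N, Ps.coeff j * Real.cos (2*Real.pi*j*k/N)
          + Ps.coeff N * Real.cos (2*Real.pi*(N:ℕ)*k/N) := by
      rw [Finset.sum_range_succ, Finset.range_eq_Ico,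
        Finset.sum_eq_sum_Ico_succ_bot hNpos]
    obtain ⟨T, hTdef⟩ : ∃ x, x = ∑ j ∈ Finset.Ico 1 N,
      (P.coeff j + δ - P.coeff N) * Real.cos (2*Real.pi*j*k/N) := ⟨_, rfl⟩
    have hmid : ∑ j ∈ Finset.Ico 1 N, Ps.coeff j * Real.cos (2*Real.pi*j*k/N)
        = (P.coeff N - δ) * (∑ j ∈ Finset.Ico 1 N, Real.cos (2*Real.pi*j*k/N))
          + s * T := by
      rw [hTdef, Finset.mul_sum, Finset.mul_sum, ← Finset.sum_add_distrib]
      apply Finset.sum_congr rfl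
      intro j hj
      rw [hPsco j, if_pos hj]
      ring
    have hT : |T| ≤ |P.coeff N| + |δ| := by
      rw [hTdef]
      refine le_trans (Finset.abs_sum_le_sum_abs _ _) (le_trans ?_ hsum)
      apply Finset.sum_le_sum
      intro j _
      rw [abs_mul]
      exact mul_le_of_le_one_right (abs_nonneg _) (Real.abs_cos_le_one _)
    have hcT1 : -( |P.coeff N| * (|P.coeff N|+|δ|)) ≤ P.coeff N * T := by
      have h2 := neg_abs_le (P.coeff N * T)
      have h3 : |P.coeff N * T| ≤ |P.coeff N| * (|P.coeff N|+|δ|) := by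
        rw [abs_mul]; exact mul_le_mul_of_nonneg_left hT (abs_nonneg _)
      linarith
    have hsT : -(s * (|P.coeff N| * (|P.coeff N|+|δ|))) ≤ s * (P.coeff N * T) := by
      have := mul_le_mul_of_nonneg_left hcT1 hs0
      linarith [this]
    have hpos : 0 < (1 - s) * (|P.coeff N| * (|P.coeff N| + |δ|)) := by
      apply mul_pos (by linarith)
      apply mul_pos ha (by linarith [abs_nonneg δ])
    have hc00 : Real.cos (2*Real.pi*((0:ℕ):ℝ)*k/N) = 1 := by norm_num
    have hcNN : Real.cos (2*Real.pi*((N:ℕ):ℝ)*k/N) = 1 := by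
      have e : 2*Real.pi*((N:ℕ):ℝ)*k/N = (k:ℝ)*(2*Real.pi) := by
        field_simp
      rw [e, Real.cos_nat_mul_two_pi]
    rw [hsplit, hmid, hPs0, hPsN, hc00, hcNN]
    by_cases hk0 : k = 0
    · subst hk0
      have hwall : ∀ j ∈ Finset.Ico 1 N, Real.cos (2*Real.pi*j*(0:ℕ)/N) = 1 := by
        intro j _; norm_num
      have hS : (∑ j ∈ Finset.Ico 1 N, Real.cos (2*Real.pi*j*(0:ℕ)/N)) = (N:ℝ) - 1 := by
        rw [Finset.sum_congr rfl hwall, Finset.sum_const, Nat.card_Ico]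
        rw [nsmul_eq_mul, mul_one, Nat.cast_sub (by omega)]
        norm_num
      rw [hS]
      nlinarith [hsT, hpos, mul_nonneg (show (0:ℝ) ≤ (N:ℝ) - 2 by linarith)
        (show (0:ℝ) ≤ |P.coeff N| * |P.coeff N| - |P.coeff N| * |δ| by
          nlinarith [hδ2, ha.le, abs_nonneg δ])]
    by_cases hkN : k = N
    · have hwall : ∀ j ∈ Finset.Ico 1 N, Real.cos (2*Real.pi*j*k/N) = 1 := by
        intro j _
        rw [hkN]
        have e : 2*Real.pi*(j:ℝ)*((N:ℕ):ℝ)/N = (j:ℝ)*(2*Real.pi) := by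
          field_simp
        rw [e, Real.cos_nat_mul_two_pi]
      have hS : (∑ j ∈ Finset.Ico 1 N, Real.cos (2*Real.pi*j*k/N)) = (N:ℝ) - 1 := by
        rw [Finset.sum_congr rfl hwall, Finset.sum_const, Nat.card_Ico]
        rw [nsmul_eq_mul, mul_one, Nat.cast_sub (by omega)]
        norm_num
      rw [hS]
      nlinarith [hsT, hpos, mul_nonneg (show (0:ℝ) ≤ (N:ℝ) - 2 by linarith)
        (show (0:ℝ) ≤ |P.coeff N| * |P.coeff N| - |P.coeff N| * |δ| by
          nlinarith [hδ2, ha.le, abs_nonneg δ])]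
    · have hS := aux_cos_sum N k (by omega) (by omega)
      rw [hS]
      nlinarith [hsT, hpos]
  -- apply the circle lemma
  obtain ⟨Q, hQ⟩ : ∃ x : Polynomial ℂ, x = Ps.map (algebraMap ℝ ℂ) := ⟨_, rfl⟩
  have hcircle : ∀ w ∈ Q.roots, ‖w‖ = 1 := by
    rw [hQ]
    exact aux_roots_on_circle N hNpos Ps hPsdeg (by rw [hPsN]; exact hcN)
      hPspal (P.coeff N) hsign
  have hsplits : Q.Splits := IsAlgClosed.splits Q
  have hQdeg : Q.natDegree = N := by
    rw [hQ, Polynomial.natDegree_map_eq_of_injective (algebraMap ℝ ℂ).injective, hPsdeg]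
  have hcard : Multiset.card Q.roots = N := by
    rw [Polynomial.splits_iff_card_roots.mp hsplits, hQdeg]
  have hlc : Q.leadingCoeff = ((P.coeff N : ℝ) : ℂ) := by
    rw [Polynomial.leadingCoeff, hQdeg, hQ, Polynomial.coeff_map, hPsN]; rfl
  have hfact := hsplits.eq_prod_roots
  have heval : Polynomial.eval z Q
      = ((P.coeff N : ℝ):ℂ) * (Multiset.map (fun a => z - a) Q.roots).prod := by
    conv_lhs => rw [hfact]
    rw [Polynomial.eval_mul, Polynomial.eval_C, hlc, Polynomial.eval_multiset_prod,
      Multiset.map_map]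
    congr 1
    exact congrArg Multiset.prod (Multiset.map_congr rfl (fun a _ => by
      simp [Function.comp]))
  have hprodge : d ^ N ≤ (Multiset.map (fun a => ‖z - a‖) Q.roots).prod := by
    have h := aux_prod_ge d hd.le (Multiset.map (fun a => ‖z - a‖) Q.roots) ?_
    · rwa [Multiset.card_map, hcard] at h
    · intro x hx
      obtain ⟨a, haroots, rfl⟩ := Multiset.mem_map.mp hx
      have h1 : ‖a‖ = 1 := hcircle a haroots
      have h2 := abs_norm_sub_norm_le z a
      rw [h1] at h2
      calc d = |‖z‖ - 1| := hdd
        _ ≤ ‖z - a‖ := h2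
  have hevalabs : |P.coeff N| * d^N ≤ ‖Polynomial.eval z Q‖ := by
    have hm : ∀ m : Multiset ℂ, ‖m.prod‖ = (m.map (fun x => ‖x‖)).prod :=
      fun m => map_multiset_prod (normHom : ℂ →*₀ ℝ) m
    rw [heval, norm_mul, hm, Multiset.map_map, Complex.norm_real, Real.norm_eq_abs]
    apply mul_le_mul_of_nonneg_left _ (abs_nonneg _)
    calc d ^ N ≤ (Multiset.map (fun a => ‖z - a‖) Q.roots).prod := hprodge
      _ = (Multiset.map ((fun x : ℂ => ‖x‖) ∘ fun a => z - a) Q.roots).prod := by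
          apply congrArg
          apply Multiset.map_congr rfl
          intro a _
          rfl
  have haeq : Polynomial.aeval z Ps = Polynomial.eval z Q := by
    rw [Polynomial.aeval_def, hQ, Polynomial.eval_map]
  have hevalPs : Polynomial.aeval z Ps = -(((1-s:ℝ)):ℂ) * Polynomial.aeval z E := by
    rw [hPs, map_sub, map_mul, Polynomial.aeval_C, hz]
    have : (algebraMap ℝ ℂ) (1-s) = (((1-s:ℝ)):ℂ) := rfl
    rw [this]
    ring
  have habs2 : ‖Polynomial.aeval z Ps‖ = (1-s) * A := by
    rw [hevalPs, norm_mul, hA]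
    congr 1
    rw [norm_neg, Complex.norm_real, Real.norm_eq_abs, abs_of_nonneg (by linarith : (0:ℝ) ≤ 1 - s)]
  have hfinal : (1-s) * A < |P.coeff N| * d^N := by
    have h1 : 1 - s = min ε0 1 / 2 := by rw [hs]; ring
    rw [h1]
    calc min ε0 1 / 2 * A ≤ ε0/2 * A := by
          apply mul_le_mul_of_nonneg_right _ hA0
          linarith [min_le_left ε0 1]
      _ < ε0 * (A+1) := by nlinarith [hε0, hA0]
      _ = |P.coeff N| * d^N := by
          rw [hε0def]
          field_simp
  rw [haeq] at habs2
  linarith [hevalabs, hfinal, habs2.symm.le, habs2.le]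
end

section
/- Let ρ ≥ 5 be a prime, b ≥ 1 an integer, 2g = ρ^{b−1}(ρ−1), and let q ≥ 4 be a real number. Let A be a real number with 0 ≤ A ≤ 2q^{ρ^{b−1}/2}(q^{ρ^{b−1}/2} − 1). Then 2q^g − 2·Σ_{u=1}^{(ρ−3)/2} q^{(2g − u ρ^{b−1})/2} − A·q^{g/2} ≥ 0. -/
lemma geom_aux (t : ℝ) (ht : 2 ≤ t) : ∀ n : ℕ, ∑ i ∈ Finset.range n, t ^ i ≤ t ^ n - 1 := by
  intro n
  induction n with
  | zero => simp
  | succ n ih =>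
    rw [Finset.sum_range_succ]
    have h0 : (0:ℝ) ≤ t := by linarith
    have h1 : (0:ℝ) ≤ t ^ n := pow_nonneg h0 n
    have h2 : t ^ (n+1) = t * t ^ n := by ring
    nlinarith

lemma sum_helper (t : ℝ) (ht : 2 ≤ t) (k : ℕ) (hk : 2 ≤ k) :
    ∑ u ∈ Finset.Icc 1 (k-1), t ^ (2*k - u) + t ^ (k+2) - t ^ (k+1) ≤ t ^ (2*k) := by
  have h0 : (0:ℝ) ≤ t := by linarith
  have e1 : ∑ u ∈ Finset.Icc 1 (k-1), t ^ (2*k - u)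
      = ∑ i ∈ Finset.range (k-1), t ^ (2*k - (1+i)) := by
    rw [← Finset.Ico_add_one_right_eq_Icc, Finset.sum_Ico_eq_sum_range, Nat.add_sub_cancel]
  have e2 : ∑ i ∈ Finset.range (k-1), t ^ (2*k - (1+i))
      = t ^ (k+1) * ∑ i ∈ Finset.range (k-1), t ^ (k - 2 - i) := by
    rw [Finset.mul_sum]
    apply Finset.sum_congr rfl
    intro i hi
    have hi' : i < k - 1 := Finset.mem_range.mp hi
    rw [← pow_add]
    congr 1
    omega
  have e3 : ∑ i ∈ Finset.range (k-1), t ^ (k - 2 - i)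
      = ∑ i ∈ Finset.range (k-1), t ^ i := by
    have := Finset.sum_range_reflect (fun i => t ^ i) (k-1)
    simpa [Nat.sub_sub] using this
  have e4 : ∑ i ∈ Finset.range (k-1), t ^ i
      = t * ∑ i ∈ Finset.range (k-2), t ^ i + 1 := by
    have hk1 : k - 1 = (k - 2) + 1 := by omega
    rw [hk1, Finset.sum_range_succ']
    simp [Finset.mul_sum]
    apply Finset.sum_congr rfl
    intro i _
    ring
  have e5 : t * ∑ i ∈ Finset.range (k-2), t ^ i ≤ t * (t ^ (k-2) - 1) := by
    apply mul_le_mul_of_nonneg_left (geom_aux t ht _) h0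
  have hprod : t ^ (k+1) * (t * t ^ (k-2)) = t ^ (2*k) := by
    rw [← pow_succ', ← pow_add]
    congr 1
    omega
  have ht1 : (0:ℝ) ≤ t ^ (k+1) := pow_nonneg h0 _
  rw [e1, e2, e3, e4]
  have hx := mul_le_mul_of_nonneg_left e5 ht1
  have hexp : t ^ (k+1) * t = t ^ (k+2) := by ring
  calc t ^ (k+1) * (t * ∑ i ∈ Finset.range (k-2), t ^ i + 1) + t ^ (k+2) - t ^ (k+1)
      = t ^ (k+1) * (t * ∑ i ∈ Finset.range (k-2), t ^ i) + t ^ (k+2) := by ring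
    _ ≤ t ^ (k+1) * (t * (t ^ (k-2) - 1)) + t ^ (k+2) := by linarith
    _ = t ^ (k+1) * (t * t ^ (k-2)) - t ^ (k+1) * t + t ^ (k+2) := by ring
    _ = t ^ (2*k) := by rw [hprod, hexp]; ring

theorem key_inequality (ρ b g : ℕ) (hρ : ρ.Prime) (hρ5 : 5 ≤ ρ) (hb : 1 ≤ b)
    (hg : 2 * g = ρ ^ (b - 1) * (ρ - 1)) (q : ℝ) (hq : 4 ≤ q) (A : ℝ) (hA0 : 0 ≤ A)
    (hA : A ≤ 2 * q ^ ((ρ ^ (b - 1) : ℝ) / 2) * (q ^ ((ρ ^ (b - 1) : ℝ) / 2) - 1)) :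
    2 * q ^ (g : ℕ) -
      2 * ∑ u ∈ Finset.Icc 1 ((ρ - 3) / 2), q ^ (((2 * g - u * ρ ^ (b - 1) : ℕ) : ℝ) / 2) -
      A * q ^ ((g : ℝ) / 2) ≥ 0 := by
  set m := ρ ^ (b - 1) with hm
  have hm1 : 1 ≤ m := Nat.one_le_pow _ _ (by omega)
  obtain ⟨k, hk⟩ : Odd ρ := hρ.odd_of_ne_two (by omega)
  have hk2 : 2 ≤ k := by omega
  have hρ1 : ρ - 1 = 2 * k := by omega
  rw [hρ1] at hg
  have hgk : g = m * k := by
    have h2 : 2 * g = 2 * (m * k) := by rw [hg]; ring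
    omega
  have hq0 : (0:ℝ) ≤ q := by linarith
  have h1q : (1:ℝ) ≤ q := by linarith
  rw [show ((ρ:ℝ) ^ (b-1)) = ((m:ℕ):ℝ) by rw [hm]; push_cast; ring] at hA
  set t := q ^ ((m : ℝ) / 2) with htdef
  -- t ≥ 2
  have ht2 : 2 ≤ t := by
    have h41 : (4:ℝ) ^ ((1:ℝ)/2) = 2 := by
      rw [show (4:ℝ) = 2^(2:ℕ) by norm_num, ← Real.rpow_natCast 2 2,
        ← Real.rpow_mul (by norm_num : (0:ℝ) ≤ 2)]
      norm_num
    have h1 : (4:ℝ) ^ ((1:ℝ)/2) ≤ q ^ ((1:ℝ)/2) :=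
      Real.rpow_le_rpow (by norm_num) hq (by norm_num)
    have h2 : q ^ ((1:ℝ)/2) ≤ t := by
      apply Real.rpow_le_rpow_of_exponent_le h1q
      have : (1:ℝ) ≤ (m:ℝ) := by exact_mod_cast hm1
      linarith
    linarith [h41 ▸ h1]
  have hpow : ∀ n : ℕ, t ^ n = q ^ ((n : ℝ) * (m : ℝ) / 2) := by
    intro n
    rw [htdef, ← Real.rpow_natCast (q ^ ((m:ℝ)/2)) n, ← Real.rpow_mul hq0]
    congr 1
    ring
  have e1 : q ^ (g : ℕ) = t ^ (2*k) := by
    rw [hpow, ← Real.rpow_natCast q g]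
    congr 1
    have : (g:ℝ) = (m:ℝ) * (k:ℝ) := by exact_mod_cast hgk
    push_cast
    rw [this]; ring
  have e2 : q ^ ((g:ℝ)/2) = t ^ k := by
    rw [hpow]
    congr 1
    have : (g:ℝ) = (m:ℝ) * (k:ℝ) := by exact_mod_cast hgk
    rw [this]; ring
  have hsumidx : (ρ - 3) / 2 = k - 1 := by omega
  have e3 : ∑ u ∈ Finset.Icc 1 ((ρ - 3) / 2), q ^ (((2 * g - u * m : ℕ) : ℝ) / 2)
      = ∑ u ∈ Finset.Icc 1 (k-1), t ^ (2*k - u) := by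
    rw [hsumidx]
    apply Finset.sum_congr rfl
    intro u hu
    obtain ⟨hu1, hu2⟩ := Finset.mem_Icc.mp hu
    have hle : u * m ≤ 2 * g := by
      calc u * m ≤ (2*k) * m := Nat.mul_le_mul_right m (by omega)
        _ = 2 * g := by rw [hgk]; ring
    have hle2 : u ≤ 2 * k := by omega
    rw [hpow]
    congr 1
    rw [Nat.cast_sub hle, Nat.cast_sub hle2]
    have : (g:ℝ) = (m:ℝ) * (k:ℝ) := by exact_mod_cast hgk
    push_cast
    rw [this]; ring
  rw [e1, e2, e3]
  have h0 : (0:ℝ) ≤ t := by linarith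
  have htk : (0:ℝ) ≤ t ^ k := pow_nonneg h0 _
  have hbound : A * t ^ k ≤ (2*t*(t-1)) * t ^ k := by
    apply mul_le_mul_of_nonneg_right hA htk
  have hkey := sum_helper t ht2 k hk2
  have hexp1 : t ^ (k+2) = t * t * t ^ k := by ring
  have hexp2 : t ^ (k+1) = t * t ^ k := by ring
  nlinarith [hkey, hbound]
end

section
/- Let ρ ≥ 5 be a prime, b ≥ 1 an integer, 2g = ρ^{b−1}(ρ−1), let q ≥ 4 be a real number, and let a_g be a real number with 0 ≤ a_g ≤ 2q^{ρ^{b−1}/2}(q^{ρ^{b−1}/2} − 1). Then every complex zero of the polynomial f(t) = t^{2g} + a_g t^g + q^g + Σ_{u=1}^{(ρ−3)/2} (t^{2g − u ρ^{b−1}} + q^{g − u ρ^{b−1}} t^{u ρ^{b−1}}) has modulus q^{1/2}. -/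
open Polynomial

namespace ZetaZeroAux

open Real Finset

lemma dickson_eval {F : Type*} [Field F] (c s : F) (hs : s ≠ 0) :
    ∀ n : ℕ, (Polynomial.dickson 1 c n).eval (s + c / s) = s ^ n + (c / s) ^ n
  | 0 => by simp [Polynomial.dickson_zero]; norm_num
  | 1 => by simp [Polynomial.dickson_one]
  | n + 2 => by
    rw [Polynomial.dickson_add_two]
    simp only [eval_sub, eval_mul, eval_X, eval_C, dickson_eval c s hs (n + 1),
      dickson_eval c s hs n]
    rw [div_pow, div_pow, div_pow]
    field_simp
    ring

lemma dickson_natDegree_le {R : Type*} [CommRing R] (c : R) :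
    ∀ n : ℕ, (Polynomial.dickson 1 c n).natDegree ≤ n
  | 0 => by
    rw [Polynomial.dickson_zero]
    exact le_trans (natDegree_sub_le _ _) (by simp)
  | 1 => by simp [Polynomial.dickson_one, natDegree_X_le]
  | n + 2 => by
    rw [Polynomial.dickson_add_two]
    refine le_trans (natDegree_sub_le _ _) (max_le ?_ ?_)
    · refine le_trans natDegree_mul_le ?_
      have h1 := dickson_natDegree_le c (n+1)
      have h2 : (X : R[X]).natDegree ≤ 1 := natDegree_X_le
      omega
    · refine le_trans natDegree_mul_le ?_
      have h1 := dickson_natDegree_le c n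
      have h2 : (C c).natDegree = 0 := natDegree_C c
      omega


lemma dickson_monic {R : Type*} [CommRing R] [IsDomain R] (c : R) :
    ∀ n : ℕ, (Polynomial.dickson 1 c (n + 1)).Monic ∧
      (Polynomial.dickson 1 c (n + 1)).degree = ((n + 1 : ℕ) : WithBot ℕ)
  | 0 => by simp [Polynomial.dickson_one, monic_X, degree_X]
  | n + 1 => by
    obtain ⟨h1, h2⟩ := dickson_monic c n
    have hXm : (X * Polynomial.dickson 1 c (n + 1)).Monic := monic_X.mul h1
    have hXd : (X * Polynomial.dickson 1 c (n + 1)).degree = ((n + 2 : ℕ) : WithBot ℕ) := by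
      rw [degree_mul, degree_X, h2]
      norm_cast; omega
    have hsmall : (C c * Polynomial.dickson 1 c n).degree < ((n + 2 : ℕ) : WithBot ℕ) := by
      refine lt_of_le_of_lt (degree_mul_le _ _) ?_
      have hd : (Polynomial.dickson 1 c n).degree ≤ (n : ℕ) :=
        natDegree_le_iff_degree_le.mp (dickson_natDegree_le c n)
      have hc : (C c).degree ≤ 0 := degree_C_le
      calc (C c).degree + (Polynomial.dickson 1 c n).degree ≤ 0 + (n : ℕ) :=
            add_le_add hc hd
        _ = (n : ℕ) := by simp
        _ < ((n + 2 : ℕ) : WithBot ℕ) := by exact_mod_cast WithBot.coe_lt_coe.mpr (by omega)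
    constructor
    · rw [Polynomial.dickson_add_two, sub_eq_add_neg]
      exact hXm.add_of_left (by rwa [degree_neg, hXd])
    · rw [Polynomial.dickson_add_two, sub_eq_add_neg,
        degree_add_eq_left_of_degree_lt (by rwa [degree_neg, hXd]), hXd]

lemma sign_pos (Q a : ℝ) (m : ℕ) (hm : 2 ≤ m) (hQ : 2 ≤ Q) (ha0 : 0 ≤ a)
    (ha : a ≤ 2 * Q * (Q - 1)) (j : ℕ) (hj : j ≤ m) :
    0 < (-1 : ℝ) ^ j *
      (a + ∑ k ∈ Finset.range m, 2 * Q ^ (k + 1) * Real.cos ((k + 1) * (j * π / m))) := by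
  obtain ⟨n, rfl⟩ : ∃ n, m = n + 2 := ⟨m - 2, by omega⟩
  have hQ0 : (0 : ℝ) < Q := by linarith
  rw [Finset.sum_range_succ, Finset.sum_range_succ']
  push_cast
  norm_num
  set θ : ℝ := j * π / (n + 2) with hθ
  have hn2 : ((n : ℝ) + 2) ≠ 0 := by positivity
  have hcosj : Real.cos (j * π) = (-1 : ℝ) ^ j := by
    simpa using Real.cos_nat_mul_pi_sub 0 j
  have hcoslast : Real.cos (((n : ℝ) + 1 + 1) * θ) = (-1 : ℝ) ^ j := by
    rw [show ((n : ℝ) + 1 + 1) * θ = j * π by rw [hθ]; field_simp; ring, hcosj]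
  rw [hcoslast]
  -- geometric bound on the middle part
  have hgeom : (∑ i ∈ Finset.range n, Q ^ i) * (Q - 1) = Q ^ n - 1 := geom_sum_mul Q n
  have hgeom0 : 0 ≤ ∑ i ∈ Finset.range n, Q ^ i :=
    Finset.sum_nonneg fun i _ => by positivity
  have hgeom2 : ∑ i ∈ Finset.range n, Q ^ i ≤ Q ^ n - 1 := by nlinarith
  have hmid : |∑ i ∈ Finset.range n, 2 * Q ^ (i + 1 + 1) * Real.cos (((i : ℝ) + 1 + 1) * θ)| ≤
      2 * (Q ^ (n + 2) - Q ^ 2) := by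
    refine le_trans (Finset.abs_sum_le_sum_abs _ _) ?_
    have h1 : ∀ i ∈ Finset.range n,
        |2 * Q ^ (i + 1 + 1) * Real.cos (((i : ℝ) + 1 + 1) * θ)| ≤ 2 * Q ^ (i + 2) := by
      intro i _
      rw [abs_mul]
      have hc := Real.abs_cos_le_one (((i : ℝ) + 1 + 1) * θ)
      have hac : 0 ≤ |Real.cos (((i : ℝ) + 1 + 1) * θ)| := abs_nonneg _
      have h2 : |2 * Q ^ (i + 1 + 1)| = 2 * Q ^ (i + 2) := by
        rw [abs_of_pos (by positivity)]
      rw [h2]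
      have hp : (0:ℝ) < Q ^ (i+2) := by positivity
      nlinarith
    refine le_trans (Finset.sum_le_sum h1) ?_
    have hss : ∑ i ∈ Finset.range n, 2 * Q ^ (i + 2) = 2 * Q ^ 2 * ∑ i ∈ Finset.range n, Q ^ i := by
      rw [Finset.mul_sum]
      refine Finset.sum_congr rfl fun i _ => ?_
      ring
    rw [hss]
    have hQ2 : (0:ℝ) < Q ^ 2 := by positivity
    have hpow : Q ^ 2 * Q ^ n = Q ^ (n + 2) := by rw [← pow_add]; ring_nf
    nlinarith
  have habs := abs_le.mp hmid
  have hcosθ1 : Real.cos θ ≤ 1 := Real.cos_le_one θ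
  have hcosθ2 : -1 ≤ Real.cos θ := Real.neg_one_le_cos θ
  have hQn : Q ^ 2 ≤ Q ^ (n + 2) := pow_le_pow_right₀ (by linarith) (by omega)
  rcases Nat.even_or_odd j with he | ho
  · rw [he.neg_one_pow]
    nlinarith [habs.1, habs.2]
  · rw [ho.neg_one_pow]
    have hj1 : 1 ≤ j := by rcases ho with ⟨t, rfl⟩; omega
    have hθpos : 0 < θ := by
      rw [hθ]
      have : (0:ℝ) < (j:ℝ) := by exact_mod_cast hj1
      positivity
    have hθle : θ ≤ π := by
      rw [hθ, div_le_iff₀ (by positivity)]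
      have hjr : (j : ℝ) ≤ (n : ℝ) + 2 := by exact_mod_cast hj
      nlinarith [Real.pi_pos]
    have hcoslt : Real.cos θ < 1 := by
      have := Real.strictAntiOn_cos ⟨le_rfl, Real.pi_pos.le⟩ ⟨hθpos.le, hθle⟩ hθpos
      simpa using this
    nlinarith [habs.1, habs.2]

lemma heval (Q a : ℝ) (m : ℕ) (hQ0 : 0 < Q) (θ : ℝ) :
    (Polynomial.C a + ∑ k ∈ Finset.range m, Polynomial.dickson 1 (Q ^ 2 : ℝ) (k + 1)).eval
        (2 * Q * Real.cos θ) =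
      a + ∑ k ∈ Finset.range m, 2 * Q ^ (k + 1) * Real.cos ((k + 1) * θ) := by
  apply Complex.ofReal_injective
  set G : Polynomial ℝ := Polynomial.C a + ∑ k ∈ Finset.range m,
    Polynomial.dickson 1 (Q ^ 2 : ℝ) (k + 1) with hG
  have h1 : ((G.eval (2 * Q * Real.cos θ) : ℝ) : ℂ) =
      Polynomial.aeval ((2 * Q * Real.cos θ : ℝ) : ℂ) G := by
    exact (Polynomial.aeval_algebraMap_apply_eq_algebraMap_eval (2 * Q * Real.cos θ) G).symm
  set s : ℂ := (Q : ℂ) * Complex.exp (θ * Complex.I) with hs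
  have hs0 : s ≠ 0 := by
    apply mul_ne_zero
    · exact_mod_cast hQ0.ne'
    · exact Complex.exp_ne_zero _
  have hdiv : ((Q : ℂ) ^ 2) / s = (Q : ℂ) * Complex.exp (-(θ * Complex.I)) := by
    rw [div_eq_iff hs0, hs, Complex.exp_neg]
    field_simp [Complex.exp_ne_zero]
  have hx : ((2 * Q * Real.cos θ : ℝ) : ℂ) = s + ((Q : ℂ) ^ 2) / s := by
    rw [hdiv, hs, Complex.exp_mul_I,
      show -((θ : ℂ) * Complex.I) = ((-θ : ℝ) : ℂ) * Complex.I by push_cast; ring,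
      Complex.exp_mul_I]
    push_cast [Complex.ofReal_cos]
    simp [Complex.cos_neg, Complex.sin_neg]
    ring
  have hterm : ∀ k' : ℕ, s ^ k' + (((Q : ℂ) ^ 2) / s) ^ k' =
      ((2 * Q ^ k' * Real.cos (k' * θ) : ℝ) : ℂ) := by
    intro k'
    rw [hdiv, hs, mul_pow, mul_pow, ← Complex.exp_nat_mul, ← Complex.exp_nat_mul,
      show ((k' : ℂ) * (θ * Complex.I)) = ((k' * θ : ℝ) : ℂ) * Complex.I by push_cast; ring,
      show ((k' : ℂ) * (-(θ * Complex.I))) = ((-(k' * θ) : ℝ) : ℂ) * Complex.I by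
        push_cast; ring,
      Complex.exp_mul_I, Complex.exp_mul_I]
    push_cast [Complex.ofReal_cos]
    simp [Complex.cos_neg, Complex.sin_neg]
    ring
  rw [h1, hx, hG]
  simp only [map_add, Polynomial.aeval_C, map_sum]
  have hdick : ∀ k : ℕ,
      Polynomial.aeval (s + ((Q : ℂ) ^ 2) / s) (Polynomial.dickson 1 (Q ^ 2 : ℝ) (k + 1)) =
        s ^ (k + 1) + (((Q : ℂ) ^ 2) / s) ^ (k + 1) := by
    intro k
    rw [Polynomial.aeval_def, Polynomial.eval₂_eq_eval_map, Polynomial.map_dickson]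
    have : (algebraMap ℝ ℂ) (Q ^ 2) = (Q : ℂ) ^ 2 := by push_cast; rfl
    rw [this, dickson_eval _ _ hs0]
  rw [Finset.sum_congr rfl fun k _ => hdick k]
  rw [Finset.sum_congr rfl fun k _ => hterm (k + 1)]
  push_cast [Complex.ofReal_cos]
  norm_num

lemma exists_roots (Q a : ℝ) (m : ℕ) (hm : 2 ≤ m) (hQ : 2 ≤ Q) (ha0 : 0 ≤ a)
    (ha : a ≤ 2 * Q * (Q - 1)) :
    ∃ x : Fin m → ℝ, Function.Injective x ∧ ∀ i, |x i| < 2 * Q ∧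
      (Polynomial.C a + ∑ k ∈ Finset.range m,
        Polynomial.dickson 1 (Q ^ 2 : ℝ) (k + 1)).eval (x i) = 0 := by
  have hQ0 : (0:ℝ) < Q := by linarith
  have hm0 : (0:ℝ) < (m:ℝ) := by exact_mod_cast (by omega : 0 < m)
  have hπ := Real.pi_pos
  set G : Polynomial ℝ := Polynomial.C a + ∑ k ∈ Finset.range m,
    Polynomial.dickson 1 (Q ^ 2 : ℝ) (k + 1) with hG
  set h : ℝ → ℝ := fun θ => G.eval (2 * Q * Real.cos θ) with hh
  have hcont : Continuous h := (G.continuous).comp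
    (continuous_const.mul Real.continuous_cos)
  have hsign : ∀ j : ℕ, j ≤ m → 0 < (-1 : ℝ) ^ j * h (j * π / m) := by
    intro j hj
    rw [hh]
    simp only [hG]
    rw [heval Q a m hQ0]
    exact sign_pos Q a m hm hQ ha0 ha j hj
  have hstep : ∀ i : Fin m,
      ∃ t ∈ Set.Ioo (((i : ℕ) : ℝ) * π / m) ((((i : ℕ) : ℝ) + 1) * π / m), h t = 0 := by
    intro i
    have hi1 : ((i : ℕ) : ℝ) + 1 ≤ (m : ℝ) := by exact_mod_cast i.2
    have hlt : ((i : ℕ) : ℝ) * π / m < (((i : ℕ) : ℝ) + 1) * π / m := by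
      rw [div_lt_div_iff₀ hm0 hm0]
      nlinarith
    rcases Nat.even_or_odd (i : ℕ) with he | ho
    · have h1 : 0 < h (((i : ℕ) : ℝ) * π / m) := by
        have := hsign (i : ℕ) (le_of_lt i.2)
        rwa [he.neg_one_pow, one_mul] at this
      have h2 : h ((((i : ℕ) : ℝ) + 1) * π / m) < 0 := by
        have := hsign ((i : ℕ) + 1) (by omega)
        rw [he.add_one.neg_one_pow] at this
        push_cast at this
        linarith
      obtain ⟨t, ht, htz⟩ := intermediate_value_Ioo' hlt.le hcont.continuousOn
        (Set.mem_Ioo.mpr ⟨h2, h1⟩)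
      exact ⟨t, ht, htz⟩
    · have h1 : h (((i : ℕ) : ℝ) * π / m) < 0 := by
        have := hsign (i : ℕ) (le_of_lt i.2)
        rw [ho.neg_one_pow] at this
        linarith
      have h2 : 0 < h ((((i : ℕ) : ℝ) + 1) * π / m) := by
        have := hsign ((i : ℕ) + 1) (by omega)
        rw [ho.add_one.neg_one_pow, one_mul] at this
        push_cast at this
        linarith
      obtain ⟨t, ht, htz⟩ := intermediate_value_Ioo hlt.le hcont.continuousOn
        (Set.mem_Ioo.mpr ⟨h1, h2⟩)
      exact ⟨t, ht, htz⟩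
  choose t ht htz using hstep
  have htpos : ∀ i, 0 < t i := fun i =>
    lt_of_le_of_lt (by positivity) (ht i).1
  have htlt : ∀ i, t i < π := fun i => by
    refine lt_of_lt_of_le (ht i).2 ?_
    have hi1 : ((i : ℕ) : ℝ) + 1 ≤ (m : ℝ) := by exact_mod_cast i.2
    rw [div_le_iff₀ hm0]
    nlinarith
  have hmono : StrictMono t := by
    intro i j hij
    have hij' : ((i : ℕ) : ℝ) + 1 ≤ ((j : ℕ) : ℝ) := by
      have : (i : ℕ) < (j : ℕ) := hij
      exact_mod_cast this
    calc t i < (((i : ℕ) : ℝ) + 1) * π / m := (ht i).2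
      _ ≤ ((j : ℕ) : ℝ) * π / m := by
          rw [div_le_div_iff₀ hm0 hm0]
          have := mul_le_mul_of_nonneg_right
            (mul_le_mul_of_nonneg_right hij' hπ.le) hm0.le
          linarith
      _ < t j := (ht j).1
  have hc1 : ∀ i, Real.cos (t i) < 1 := by
    intro i
    have := Real.strictAntiOn_cos ⟨le_rfl, hπ.le⟩ ⟨(htpos i).le, (htlt i).le⟩ (htpos i)
    simpa using this
  have hc2 : ∀ i, -1 < Real.cos (t i) := by
    intro i
    have := Real.strictAntiOn_cos ⟨(htpos i).le, (htlt i).le⟩ ⟨hπ.le, le_rfl⟩ (htlt i)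
    simpa using this
  refine ⟨fun i => 2 * Q * Real.cos (t i), ?_, ?_⟩
  · intro i j hij
    have hij2 : 2 * Q * Real.cos (t i) = 2 * Q * Real.cos (t j) := hij
    have h2Q : (2 * Q) ≠ 0 := by positivity
    have hcc : Real.cos (t i) = Real.cos (t j) := mul_left_cancel₀ h2Q hij2
    have := Real.strictAntiOn_cos.injOn ⟨(htpos i).le, (htlt i).le⟩
      ⟨(htpos j).le, (htlt j).le⟩ hcc
    exact hmono.injective this
  · intro i
    refine ⟨?_, htz i⟩
    show |2 * Q * Real.cos (t i)| < 2 * Q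
    rw [abs_lt]
    exact ⟨by nlinarith [hc2 i], by nlinarith [hc1 i]⟩

lemma key (Q a : ℝ) (m : ℕ) (hm : 2 ≤ m) (hQ : 2 ≤ Q) (ha0 : 0 ≤ a)
    (ha : a ≤ 2 * Q * (Q - 1)) (x : ℂ)
    (hx : Polynomial.aeval x (Polynomial.C a + ∑ k ∈ Finset.range m,
      Polynomial.dickson 1 (Q ^ 2 : ℝ) (k + 1)) = 0) :
    ∃ r : ℝ, x = (r : ℂ) ∧ r ^ 2 < 4 * Q ^ 2 := by
  set G : Polynomial ℝ := Polynomial.C a + ∑ k ∈ Finset.range m,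
    Polynomial.dickson 1 (Q ^ 2 : ℝ) (k + 1) with hG
  obtain ⟨n, hmn⟩ : ∃ n, m = n + 2 := ⟨m - 2, by omega⟩
  -- G is monic of degree m
  have hrest : (Polynomial.C a + ∑ k ∈ Finset.range (n + 1),
      Polynomial.dickson 1 (Q ^ 2 : ℝ) (k + 1)).degree < ((m : ℕ) : WithBot ℕ) := by
    refine lt_of_le_of_lt (degree_add_le _ _) (max_lt ?_ ?_)
    · exact lt_of_le_of_lt degree_C_le (by exact_mod_cast WithBot.coe_lt_coe.mpr (by omega) : (0 : WithBot ℕ) < ((m:ℕ) : WithBot ℕ))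
    · refine lt_of_le_of_lt (degree_sum_le _ _) ?_
      rw [Finset.sup_lt_iff (by exact_mod_cast WithBot.bot_lt_coe m)]
      intro k hk
      have h1 : (Polynomial.dickson 1 (Q ^ 2 : ℝ) (k + 1)).degree ≤ ((k + 1 : ℕ) : WithBot ℕ) :=
        natDegree_le_iff_degree_le.mp (dickson_natDegree_le _ _)
      refine lt_of_le_of_lt h1 ?_
      have : k + 1 < m := by
        have := Finset.mem_range.mp hk; omega
      exact_mod_cast WithBot.coe_lt_coe.mpr this
  have hGsplit : G = Polynomial.dickson 1 (Q ^ 2 : ℝ) (n + 2) +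
      (Polynomial.C a + ∑ k ∈ Finset.range (n + 1), Polynomial.dickson 1 (Q ^ 2 : ℝ) (k + 1)) := by
    rw [hG, hmn, Finset.sum_range_succ]
    ring
  have hdm := dickson_monic (Q ^ 2 : ℝ) (n + 1)
  have hdm2 : (Polynomial.dickson 1 (Q ^ 2 : ℝ) (n + 2)).degree = ((m : ℕ) : WithBot ℕ) := by
    rw [show n + 1 + 1 = n + 2 from rfl] at hdm
    rw [hdm.2, hmn]
  have hGmonic : G.Monic := by
    rw [hGsplit]
    exact (hdm.1).add_of_left (by rw [hdm2]; exact hrest)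
  have hGdeg : G.degree = ((m : ℕ) : WithBot ℕ) := by
    rw [hGsplit, degree_add_eq_left_of_degree_lt (by rw [hdm2]; exact hrest), hdm2]
  have hGnat : G.natDegree = m := natDegree_eq_of_degree_eq_some hGdeg
  obtain ⟨xs, hinj, hprop⟩ := exists_roots Q a m hm hQ ha0 ha
  set P : Polynomial ℝ := ∏ i : Fin m, (X - Polynomial.C (xs i)) with hP
  have hPmonic : P.Monic := monic_prod_of_monic _ _ fun i _ => monic_X_sub_C _
  have hPnat : P.natDegree = m := by
    rw [hP, natDegree_prod _ _ fun i _ => X_sub_C_ne_zero _]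
    simp
  have hGP : G = P := by
    by_contra hne
    have hsub : G - P ≠ 0 := sub_ne_zero.mpr hne
    have hPdeg : P.degree = ((m : ℕ) : WithBot ℕ) := by
      rw [degree_eq_natDegree hPmonic.ne_zero, hPnat]
    have hdeg : (G - P).degree < G.degree :=
      degree_sub_lt (hGdeg.trans hPdeg.symm) hGmonic.ne_zero
        (by rw [hGmonic.leadingCoeff, hPmonic.leadingCoeff])
    have hdeg2 : (G - P).natDegree < m := by
      rw [natDegree_lt_iff_degree_lt hsub]
      rw [hGdeg] at hdeg
      exact hdeg
    have hzero : G - P = 0 := by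
      refine Polynomial.eq_zero_of_natDegree_lt_card_of_eval_eq_zero (G - P) hinj
        (fun i => ?_) (by rwa [Fintype.card_fin])
      rw [eval_sub, (hprop i).2, hP, eval_prod]
      have : eval (xs i) (X - Polynomial.C (xs i)) = 0 := by simp
      rw [Finset.prod_eq_zero (Finset.mem_univ i) this]
      ring
    exact hsub hzero
  rw [hGP] at hx
  rw [hP] at hx
  simp only [map_prod, map_sub, Polynomial.aeval_X, Polynomial.aeval_C] at hx
  obtain ⟨i, -, hi⟩ := Finset.prod_eq_zero_iff.mp hx
  refine ⟨xs i, by rwa [sub_eq_zero] at hi, ?_⟩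
  have := (hprop i).1
  have hQ0 : (0:ℝ) < Q := by linarith
  nlinarith [abs_lt.mp this]

lemma expand (s cc : ℂ) (hs : s ≠ 0) (m : ℕ) (hm : 2 ≤ m) (A : ℂ) :
    s ^ m * (A + ∑ k ∈ Finset.range m, (s ^ (k + 1) + (cc / s) ^ (k + 1))) =
      s ^ (2 * m) + A * s ^ m + cc ^ m +
        ∑ u ∈ Finset.Icc 1 (m - 1), (s ^ (2 * m - u) + cc ^ (m - u) * s ^ u) := by
  have hterm : ∀ k, k < m → s ^ m * (s ^ (k + 1) + (cc / s) ^ (k + 1)) =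
      s ^ (m + (k + 1)) + cc ^ (k + 1) * s ^ (m - (k + 1)) := by
    intro k hk
    have hsm : s ^ m = s ^ (m - (k + 1)) * s ^ (k + 1) := by
      rw [← pow_add]; congr 1; omega
    rw [div_pow, mul_add, ← pow_add]
    congr 1
    calc s ^ m * (cc ^ (k + 1) / s ^ (k + 1))
        = (s ^ (m - (k + 1)) * s ^ (k + 1)) * (cc ^ (k + 1) / s ^ (k + 1)) := by rw [← hsm]
      _ = cc ^ (k + 1) * s ^ (m - (k + 1)) := by
          field_simp
  rw [mul_add, Finset.mul_sum,
    Finset.sum_congr rfl (fun k hk => hterm k (Finset.mem_range.mp hk))]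
  obtain ⟨n, rfl⟩ : ∃ n, m = n + 1 := ⟨m - 1, by omega⟩
  rw [Finset.sum_range_succ]
  have hIcc : ∑ u ∈ Finset.Icc 1 (n + 1 - 1), (s ^ (2 * (n + 1) - u) + cc ^ (n + 1 - u) * s ^ u) =
      ∑ i ∈ Finset.range n, (s ^ (2 * (n + 1) - (1 + i)) + cc ^ (n + 1 - (1 + i)) * s ^ (1 + i)) := by
    rw [show n + 1 - 1 = n from rfl, ← Finset.Ico_add_one_right_eq_Icc, Finset.sum_Ico_eq_sum_range]
    apply Finset.sum_congr (by congr 1)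
    intro i _
    rfl
  rw [hIcc, ← Finset.sum_range_reflect (fun i => s ^ (2 * (n + 1) - (1 + i)) +
      cc ^ (n + 1 - (1 + i)) * s ^ (1 + i)) n]
  have hcongr : ∀ i ∈ Finset.range n,
      s ^ (n + 1 + (i + 1)) + cc ^ (i + 1) * s ^ (n + 1 - (i + 1)) =
        s ^ (2 * (n + 1) - (1 + (n - 1 - i))) + cc ^ (n + 1 - (1 + (n - 1 - i))) * s ^ (1 + (n - 1 - i)) := by
    intro i hi
    have hin : i < n := Finset.mem_range.mp hi
    have e1 : n + 1 + (i + 1) = 2 * (n + 1) - (1 + (n - 1 - i)) := by omega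
    have e2 : i + 1 = n + 1 - (1 + (n - 1 - i)) := by omega
    have e3 : n + 1 - (i + 1) = 1 + (n - 1 - i) := by omega
    rw [e3, e1, e2]
  rw [Finset.sum_congr rfl hcongr]
  have h2 : s ^ (n + 1 + (n + 1)) = s ^ (2 * (n + 1)) := by congr 1; omega
  have h3 : s ^ (n + 1 - (n + 1)) = 1 := by rw [Nat.sub_self, pow_zero]
  rw [h2, h3]
  ring


end ZetaZeroAux

open ZetaZeroAux in
theorem zeros_have_modulus_sqrt_q (ρ b g : ℕ) (hρ : ρ.Prime) (hρ5 : 5 ≤ ρ) (hb : 1 ≤ b)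
    (hg : 2 * g = ρ ^ (b - 1) * (ρ - 1)) (q : ℝ) (hq : 4 ≤ q) (a : ℝ) (ha0 : 0 ≤ a)
    (ha : a ≤ 2 * q ^ ((ρ ^ (b - 1) : ℝ) / 2) * (q ^ ((ρ ^ (b - 1) : ℝ) / 2) - 1)) :
    ∀ z : ℂ,
      Polynomial.aeval z
        ((X ^ (2 * g) + C a * X ^ g + C (q ^ g) +
          ∑ u ∈ Finset.Icc 1 ((ρ - 3) / 2),
            (X ^ (2 * g - u * ρ ^ (b - 1)) +
              C (q ^ (g - u * ρ ^ (b - 1))) * X ^ (u * ρ ^ (b - 1)))) : Polynomial ℝ) = 0 →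
      ‖z‖ = Real.sqrt q := by
  intro z hz
  set p : ℕ := ρ ^ (b - 1) with hp
  have hρ0 : 0 < ρ := by omega
  have hp1 : 1 ≤ p := Nat.one_le_pow _ _ hρ0
  have hodd : Odd ρ := hρ.odd_of_ne_two (by omega)
  obtain ⟨m, hρm⟩ := hodd
  have hm2 : 2 ≤ m := by omega
  have h2m : ρ - 1 = 2 * m := by omega
  have hgm : g = p * m := by
    have h1 : 2 * g = 2 * (p * m) := by rw [hg, h2m]; ring
    omega
  have hm3 : (ρ - 3) / 2 = m - 1 := by omega
  have hq0 : (0:ℝ) < q := by linarith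
  set Q : ℝ := Real.sqrt q ^ p with hQ
  have hsq2 : (2:ℝ) ≤ Real.sqrt q := by
    rw [show (2:ℝ) = Real.sqrt 4 by
      rw [show (4:ℝ) = 2 ^ 2 by norm_num, Real.sqrt_sq (by norm_num : (0:ℝ) ≤ 2)]]
    exact Real.sqrt_le_sqrt hq
  have hQ2 : (2:ℝ) ≤ Q := by
    calc (2:ℝ) = 2 ^ 1 := (pow_one 2).symm
      _ ≤ 2 ^ p := pow_le_pow_right₀ one_le_two hp1
      _ ≤ Real.sqrt q ^ p := pow_le_pow_left₀ (by norm_num) hsq2 p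
  have hQ0 : (0:ℝ) < Q := by linarith
  have hQsq : Q ^ 2 = q ^ p := by
    rw [hQ, ← pow_mul, mul_comm p 2, pow_mul, Real.sq_sqrt hq0.le]
  have hQr : q ^ ((p : ℝ) / 2) = Q := by
    rw [show ((p:ℝ)/2) = (1/2 : ℝ) * (p:ℝ) by ring, Real.rpow_mul hq0.le,
      Real.rpow_natCast, ← Real.sqrt_eq_rpow]
  have haQ : a ≤ 2 * Q * (Q - 1) := by
    rw [show ((ρ : ℝ)) ^ (b - 1) = ((p : ℕ) : ℝ) by rw [hp]; push_cast; ring] at ha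
    rw [hQr] at ha
    exact ha
  -- simplify hz
  simp only [map_add, map_sum, map_mul, Polynomial.aeval_X_pow, Polynomial.aeval_C,
    Complex.coe_algebraMap] at hz
  rw [hm3] at hz
  have hmp : 0 < m := by omega
  have hpp : 0 < p := by omega
  have hg0 : 0 < g := by rw [hgm]; exact Nat.mul_pos hpp hmp
  have hz0 : z ≠ 0 := by
    intro h0
    rw [h0] at hz
    have hsum0 : ∑ u ∈ Finset.Icc 1 (m - 1),
        ((0:ℂ) ^ (2 * g - u * p) + ((q ^ (g - u * p) : ℝ) : ℂ) * (0:ℂ) ^ (u * p)) = 0 := by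
      apply Finset.sum_eq_zero
      intro u hu
      obtain ⟨hu1, hu2⟩ := Finset.mem_Icc.mp hu
      have hup : u * p ≠ 0 := Nat.mul_ne_zero (by omega) (by omega)
      have h2g : 2 * g - u * p ≠ 0 := by
        have h1 : u * p ≤ (m - 1) * p := Nat.mul_le_mul_right _ hu2
        have h2 : (m - 1) * p < 2 * (p * m) := by
          calc (m - 1) * p < (2 * m) * p := (Nat.mul_lt_mul_right hpp).mpr (by omega)
            _ = 2 * (p * m) := by ring
        omega
      rw [zero_pow hup, zero_pow h2g, mul_zero, add_zero]
    rw [hsum0, add_zero, zero_pow (by omega : 2 * g ≠ 0),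
      zero_pow (by rw [hgm]; exact Nat.mul_ne_zero (by omega) (by omega) : g ≠ 0),
      mul_zero, zero_add, zero_add] at hz
    have : (q ^ g : ℝ) = 0 := by exact_mod_cast hz
    nlinarith [pow_pos hq0 g]
  set s : ℂ := z ^ p with hs
  have hs0 : s ≠ 0 := pow_ne_zero _ hz0
  set c : ℝ := q ^ p with hc
  set x : ℂ := s + (c : ℂ) / s with hx
  -- substitute z-powers by s-powers in hz
  have hz2g : z ^ (2 * g) = s ^ (2 * m) := by
    rw [hs, ← pow_mul]
    congr 1
    have : p * (2 * m) = 2 * (p * m) := by ring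
    omega
  have hzg : z ^ g = s ^ m := by rw [hs, ← pow_mul, hgm]
  have hzqg : ((q ^ g : ℝ) : ℂ) = ((c : ℝ) : ℂ) ^ m := by
    rw [hc, hgm]
    push_cast
    ring
  have hzsum : ∑ u ∈ Finset.Icc 1 (m - 1),
      (z ^ (2 * g - u * p) + ((q ^ (g - u * p) : ℝ) : ℂ) * z ^ (u * p)) =
      ∑ u ∈ Finset.Icc 1 (m - 1),
      (s ^ (2 * m - u) + ((c : ℝ) : ℂ) ^ (m - u) * s ^ u) := by
    apply Finset.sum_congr rfl
    intro u hu
    obtain ⟨hu1, hu2⟩ := Finset.mem_Icc.mp hu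
    have e1 : 2 * g - u * p = p * (2 * m - u) := by
      have h1 : (2 * m - u) * p = 2 * m * p - u * p := Nat.sub_mul _ _ _
      have h2 : 2 * m * p = 2 * g := by rw [hgm]; ring
      have h3 : p * (2 * m - u) = (2 * m - u) * p := by ring
      omega
    have e2 : g - u * p = p * (m - u) := by
      have h1 : (m - u) * p = m * p - u * p := Nat.sub_mul _ _ _
      have h2 : m * p = g := by rw [hgm]; ring
      have h3 : p * (m - u) = (m - u) * p := by ring
      omega
    rw [e1, e2, pow_mul z, ← hs, hc]
    push_cast
    ring
  rw [hz2g, hzg, hzqg, hzsum] at hz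
  -- the key polynomial identity
  have hkey : s ^ m * (Polynomial.aeval x (Polynomial.C a + ∑ k ∈ Finset.range m,
      Polynomial.dickson 1 (Q ^ 2 : ℝ) (k + 1))) = 0 := by
    have hdick : ∀ k : ℕ, Polynomial.aeval x (Polynomial.dickson 1 (Q ^ 2 : ℝ) (k + 1)) =
        s ^ (k + 1) + (((c : ℝ) : ℂ) / s) ^ (k + 1) := by
      intro k
      rw [Polynomial.aeval_def, Polynomial.eval₂_eq_eval_map, Polynomial.map_dickson]
      have h1 : (algebraMap ℝ ℂ) (Q ^ 2) = ((c : ℝ) : ℂ) := by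
        rw [hQsq]; rfl
      rw [h1, hx]
      exact dickson_eval _ _ hs0 (k + 1)
    simp only [map_add, Polynomial.aeval_C, map_sum, Complex.coe_algebraMap]
    rw [Finset.sum_congr rfl (fun k _ => hdick k)]
    rw [expand s ((c : ℝ) : ℂ) hs0 m hm2 ((a : ℝ) : ℂ)]
    exact hz
  have hGz : Polynomial.aeval x (Polynomial.C a + ∑ k ∈ Finset.range m,
      Polynomial.dickson 1 (Q ^ 2 : ℝ) (k + 1)) = 0 := by
    rcases mul_eq_zero.mp hkey with h | h
    · exact absurd h (pow_ne_zero _ hs0)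
    · exact h
  obtain ⟨r, hxr, hr2⟩ := key Q a m hm2 hQ2 ha0 haQ x hGz
  -- endgame
  have hceq : Q ^ 2 = c := by rw [hQsq, hc]
  have hc0 : (0:ℝ) < c := by rw [hc]; positivity
  have heq1 : s ^ 2 - (r : ℂ) * s + ((c : ℝ) : ℂ) = 0 := by
    have h1 : s + ((c : ℝ) : ℂ) / s = (r : ℂ) := by rw [← hx, hxr]
    have h2 : (s + ((c : ℝ) : ℂ) / s) * s = (r : ℂ) * s := by rw [h1]
    field_simp at h2
    linear_combination h2
  have heq2 : (starRingEnd ℂ) s ^ 2 - (r : ℂ) * (starRingEnd ℂ) s + ((c : ℝ) : ℂ) = 0 := by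
    have := congrArg (starRingEnd ℂ) heq1
    simpa [map_sub, map_add, map_mul, map_pow, Complex.conj_ofReal] using this
  have hfactor : (s - (starRingEnd ℂ) s) * (s + (starRingEnd ℂ) s - (r : ℂ)) = 0 := by
    linear_combination heq1 - heq2
  have habs2 : ‖z‖ ^ 2 = q := by
    rcases mul_eq_zero.mp hfactor with hcase | hcase
    · -- s is real: contradiction with discriminant
      exfalso
      have hconj : (starRingEnd ℂ) s = s := by linear_combination -hcase
      have hre : ((s.re : ℝ) : ℂ) = s := Complex.conj_eq_iff_re.mp hconj
      set t : ℝ := s.re with ht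
      have heq3 : ((t ^ 2 - r * t + c : ℝ) : ℂ) = 0 := by
        push_cast
        rw [hre]
        linear_combination heq1
      have heq4 : t ^ 2 - r * t + c = 0 := by exact_mod_cast heq3
      have hr2' : r ^ 2 < 4 * c := by rw [← hceq]; linarith
      nlinarith [sq_nonneg (2 * t - r)]
    · -- |s|^2 = c
      have hcc : ((c : ℝ) : ℂ) = s * (starRingEnd ℂ) s := by
        linear_combination heq1 - s * hcase
      rw [Complex.mul_conj] at hcc
      have hc2 : c = Complex.normSq s := by exact_mod_cast hcc
      have hc3 : c = ‖s‖ ^ 2 := by rw [hc2, Complex.sq_norm]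
      have hc4 : ‖s‖ = ‖z‖ ^ p := by rw [hs, norm_pow]
      have hc5 : (‖z‖ ^ 2) ^ p = q ^ p := by
        rw [← hc, hc3, hc4]
        ring
      exact (pow_left_strictMonoOn₀ (by omega : p ≠ 0)).injOn
        (by simp only [Set.mem_setOf_eq]; positivity)
        (by simp only [Set.mem_setOf_eq]; exact hq0.le) hc5
  rw [← habs2, Real.sqrt_sq (norm_nonneg z)]
end

section
/- Let ρ ≥ 5 be a prime, b ≥ 1 an integer, 2g = ρ^{b−1}(ρ−1), r a prime that is a primitive root modulo ρ², and let q ≥ 4. Let m ≥ 0 be an integer and set a_g = mr + 1. Then the integer polynomial f(t) = t^{2g} + a_g t^g + q^g + Σ_{u=1}^{(ρ−3)/2} (t^{2g − u ρ^{b−1}} + q^{g − u ρ^{b−1}} t^{u ρ^{b−1}}) is congruent modulo r to Φ_{ρ^b}(t) when q ≡ 1 (mod r), and is therefore irreducible over ℚ. -/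
open Polynomial Finset

lemma sum_Icc_one {M : Type*} [AddCommMonoid M] (f : ℕ → M) (n : ℕ) :
    ∑ u ∈ Finset.Icc 1 n, f u = ∑ i ∈ Finset.range n, f (i + 1) := by
  refine Finset.sum_nbij' (fun u => u - 1) (fun i => i + 1) ?_ ?_ ?_ ?_ ?_ <;>
    intros <;> simp_all [Finset.mem_Icc, Finset.mem_range] <;> omega

lemma key_sum {R : Type*} [CommRing R] (h k : ℕ) (hh : 1 ≤ h) (hk : 1 ≤ k) :
    (X : R[X]) ^ (2*h*k) + X ^ (h*k) + 1 +
      ∑ u ∈ Finset.Icc 1 (h-1), ((X : R[X]) ^ (2*h*k - u*k) + X ^ (u*k))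
    = ∑ i ∈ Finset.range (2*h+1), (X ^ k) ^ i := by
  obtain ⟨n, rfl⟩ : ∃ n, h = n + 1 := ⟨h - 1, by omega⟩
  have e1 : ∀ i : ℕ, ((X : R[X]) ^ k) ^ i = X ^ (k * i) := fun i => by rw [← pow_mul]
  simp only [e1, Nat.add_sub_cancel]
  rw [show 2*(n+1)+1 = (n+1)+(n+2) by omega, Finset.sum_range_add,
    Finset.sum_range_succ' (fun i => (X:R[X]) ^ (k * i)) n,
    Finset.sum_range_succ (fun i => (X:R[X]) ^ (k * (n + 1 + i))) (n+1),
    Finset.sum_range_succ' (fun i => (X:R[X]) ^ (k * (n + 1 + i))) n,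
    sum_Icc_one (fun u => (X:R[X]) ^ (2*(n+1)*k - u*k) + X ^ (u*k)) n,
    Finset.sum_add_distrib]
  have e2 : ∑ i ∈ Finset.range n, (X:R[X]) ^ (2*(n+1)*k - (i+1)*k)
      = ∑ i ∈ Finset.range n, (X:R[X]) ^ (k * (n + 1 + (i + 1))) := by
    rw [← Finset.sum_range_reflect (fun i => (X:R[X]) ^ (k * (n + 1 + (i + 1)))) n]
    refine Finset.sum_congr rfl fun i hi => ?_
    rw [Finset.mem_range] at hi
    congr 1
    rw [show 2*(n+1)*k - (i+1)*k = (2*(n+1) - (i+1)) * k from (Nat.sub_mul _ _ _).symm,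
      mul_comm k]
    congr 1
    omega
  have e3 : ∑ i ∈ Finset.range n, (X:R[X]) ^ ((i+1)*k)
      = ∑ i ∈ Finset.range n, (X:R[X]) ^ (k * (i+1)) :=
    Finset.sum_congr rfl fun i _ => by rw [mul_comm]
  rw [e2, e3, show 2*(n+1)*k = k * (n+1+(n+1)) by ring, show (n+1)*k = k*(n+1+0) by ring,
    show (1 : R[X]) = X ^ (k * 0) by rw [mul_zero, pow_zero]]
  ring

lemma pow_aux (p : ℕ) (hp : p.Prime) (hp2 : p ≠ 2) (t : ℤ) (k : ℕ) (hk : 1 ≤ k)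
    (h1 : (p:ℤ)^k ∣ t) : ((p:ℤ)^(k+2)) ∣ ((1 + t)^p - 1 - p * t) := by
  have hp3 : 3 ≤ p := by have := hp.two_le; omega
  have hchoose : (p:ℤ) ∣ (p.choose 2 : ℤ) :=
    Int.natCast_dvd_natCast.mpr (hp.dvd_choose_self (by norm_num) (by omega))
  obtain ⟨s, hs⟩ : ∃ s, p = s + 3 := ⟨p - 3, by omega⟩
  subst hs
  rw [add_comm (1:ℤ) t, add_pow]
  simp only [one_pow, mul_one]
  rw [Finset.sum_range_succ' (fun j => t ^ j * (((s+3)).choose j : ℤ)) (s+3),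
    Finset.sum_range_succ' (fun j => t ^ (j+1) * (((s+3)).choose (j+1) : ℤ)) (s+2)]
  simp only [zero_add, pow_zero, one_mul, Nat.choose_zero_right, Nat.cast_one, pow_one,
    Nat.choose_one_right]
  rw [show ∀ a b c : ℤ, a + t * b + c - c - b * t = a from fun a b c => by ring]
  apply Finset.dvd_sum
  intro j hj
  have h2 : ∀ i : ℕ, ((s+3:ℕ):ℤ)^(k * i) ∣ t ^ i := fun i => by
    rw [pow_mul]; exact pow_dvd_pow_of_dvd h1 i
  rcases Nat.eq_zero_or_pos j with rfl | hj1
  · calc ((s+3:ℕ):ℤ)^(k+2) ∣ ((s+3:ℕ):ℤ)^(k*2+1) := pow_dvd_pow _ (by omega)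
      _ = ((s+3:ℕ):ℤ)^(k*2) * (s+3:ℕ) := pow_succ _ _
      _ ∣ t ^ (0+1+1) * ((s+3).choose (0+1+1) : ℤ) := mul_dvd_mul (h2 2) hchoose
  · refine dvd_trans (dvd_trans (pow_dvd_pow _ ?_) (h2 (j+1+1))) (dvd_mul_right _ _)
    have : k * 3 ≤ k * (j+1+1) := Nat.mul_le_mul_left k (by omega)
    omega

lemma tfact (p : ℕ) (hp : p.Prime) (hp2 : p ≠ 2) (r : ℤ)
    (h1 : (p:ℤ) ∣ r^(p-1) - 1) (h2 : ¬ ((p:ℤ)^2 ∣ r^(p-1) - 1)) :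
    ∀ k, 1 ≤ k →
      (p:ℤ)^k ∣ r^(p^(k-1)*(p-1)) - 1 ∧ ¬ ((p:ℤ)^(k+1) ∣ r^(p^(k-1)*(p-1)) - 1) := by
  intro k hk
  induction k with
  | zero => omega
  | succ k ih =>
    rcases Nat.eq_zero_or_pos k with rfl | hk1
    · simpa using ⟨h1, h2⟩
    · obtain ⟨j, rfl⟩ : ∃ j, k = j + 1 := ⟨k - 1, by omega⟩
      obtain ⟨hA, hB⟩ := ih hk1
      simp only [Nat.add_sub_cancel] at hA hB ⊢
      set t := r^(p^j*(p-1)) - 1 with ht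
      have h1t : 1 + t = r^(p^j*(p-1)) := by rw [ht]; ring
      have hr : r^(p^(j+1)*(p-1)) - 1 = (1 + t)^p - 1 := by
        rw [h1t, ← pow_mul, show p^j*(p-1)*p = p^(j+1)*(p-1) by rw [pow_succ]; ring]
      have hs := pow_aux p hp hp2 t (j+1) hk1 hA
      have hpt : (p:ℤ)^(j+1+1) ∣ (p:ℤ) * t := by
        rw [pow_succ']; exact mul_dvd_mul_left _ hA
      constructor
      · rw [hr, show (1+t)^p - 1 = (p:ℤ)*t + ((1+t)^p - 1 - p*t) by ring]
        exact dvd_add hpt (dvd_trans (pow_dvd_pow _ (by omega)) hs)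
      · rw [hr]
        intro hcon
        have hthis : (p:ℤ)^(j+1+2) ∣ (p:ℤ) * t := by
          rw [show (p:ℤ)*t = ((1+t)^p - 1) - ((1+t)^p - 1 - p*t) by ring]
          exact dvd_sub (by simpa using hcon) hs
        rw [show j+1+2 = 1+(j+1+1) by omega, pow_add, pow_one] at hthis
        have hp0 : (p:ℤ) ≠ 0 := by exact_mod_cast hp.ne_zero
        exact hB ((mul_dvd_mul_iff_left hp0).mp hthis)

lemma order_lift (p : ℕ) (hp : p.Prime) (hp2 : p ≠ 2) (r : ℕ)
    (hprim : orderOf (r : ZMod (p ^ 2)) = (p ^ 2).totient) :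
    ∀ b, 2 ≤ b → orderOf (r : ZMod (p ^ b)) = (p ^ b).totient := by
  have hp1 : 1 < p := hp.one_lt
  have hppos : ∀ n : ℕ, 0 < p ^ n := fun n => Nat.pow_pos (n := n) hp.pos
  have htot : ∀ n : ℕ, 1 ≤ n → (p^n).totient = p^(n-1)*(p-1) := fun n hn =>
    Nat.totient_prime_pow hp hn
  -- r is coprime to p
  have hfin : IsOfFinOrder (r : ZMod (p^2)) := by
    rw [← orderOf_pos_iff, hprim]
    exact Nat.totient_pos.mpr (hppos 2)
  have hunit : IsUnit (r : ZMod (p^2)) := hfin.isUnit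
  have hcop2 : r.Coprime (p^2) := by
    haveI : NeZero (p^2) := ⟨(hppos 2).ne'⟩
    exact (ZMod.isUnit_iff_coprime r (p^2)).mp hunit
  have hcop : r.Coprime p := Nat.Coprime.coprime_dvd_right (dvd_pow_self p two_ne_zero) hcop2
  -- Fermat base facts
  have h1 : (p:ℤ) ∣ (r:ℤ)^(p-1) - 1 := by
    haveI : Fact p.Prime := ⟨hp⟩
    have hr0 : (r : ZMod p) ≠ 0 := by
      rw [Ne, ZMod.natCast_eq_zero_iff]
      exact (Nat.Prime.coprime_iff_not_dvd hp).mp hcop.symm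
    have := ZMod.pow_card_sub_one_eq_one hr0
    rw [← ZMod.intCast_zmod_eq_zero_iff_dvd]
    push_cast
    rw [this]; ring
  have h2 : ¬ ((p:ℤ)^2 ∣ (r:ℤ)^(p-1) - 1) := by
    intro hcon
    have : ((r:ℤ)^(p-1) - 1 : ℤ) = ((r:ℤ)^(p-1) - 1) := rfl
    have hz : (((r:ℤ)^(p-1) - 1 : ℤ) : ZMod (p^2)) = 0 := by
      rw [ZMod.intCast_zmod_eq_zero_iff_dvd]
      push_cast
      exact_mod_cast hcon
    have hpow : (r : ZMod (p^2))^(p-1) = 1 := by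
      have : ((r:ℤ) : ZMod (p^2))^(p-1) - 1 = 0 := by push_cast at hz ⊢; linear_combination hz
      push_cast at this
      linear_combination this
    have hdvd : orderOf (r : ZMod (p^2)) ∣ p - 1 := orderOf_dvd_of_pow_eq_one hpow
    rw [hprim, htot 2 (by omega)] at hdvd
    have hle := Nat.le_of_dvd (by omega) hdvd
    norm_num at hle
    have h2le : 2*(p-1) ≤ p*(p-1) := Nat.mul_le_mul_right _ hp1
    omega
  intro b hb
  induction b, hb using Nat.le_induction with
  | base => exact hprim
  | succ b hb ih =>
    set d := orderOf (r : ZMod (p^(b+1))) with hd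
    have hcop' : r.Coprime (p^(b+1)) := Nat.Coprime.pow_right _ hcop
    have heuler : (r : ZMod (p^(b+1)))^((p^(b+1)).totient) = 1 := by
      have := Nat.ModEq.pow_totient hcop'
      have := (ZMod.natCast_eq_natCast_iff _ _ _).mpr this
      push_cast at this
      simpa using this
    have hd_dvd : d ∣ (p^(b+1)).totient := orderOf_dvd_of_pow_eq_one heuler
    have hdvd_d : (p^b).totient ∣ d := by
      rw [← ih]
      apply orderOf_dvd_of_pow_eq_one
      have h := pow_orderOf_eq_one (r : ZMod (p^(b+1)))
      have := congrArg (ZMod.castHom (pow_dvd_pow p (Nat.le_succ b)) (ZMod (p^b))) h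
      rw [map_pow, map_natCast, map_one] at this
      exact this
    have hne : d ≠ (p^b).totient := by
      intro hcon
      have hpow : (r : ZMod (p^(b+1)))^((p^b).totient) = 1 := hcon ▸ pow_orderOf_eq_one _
      have hz : (((r:ℤ)^(p^(b-1)*(p-1)) - 1 : ℤ) : ZMod (p^(b+1))) = 0 := by
        rw [← htot b (by omega)]
        push_cast
        rw [hpow]; ring
      rw [ZMod.intCast_zmod_eq_zero_iff_dvd] at hz
      push_cast at hz
      exact (tfact p hp hp2 r h1 h2 b (by omega)).2 hz
    have htoteq : (p^(b+1)).totient = (p^b).totient * p := by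
      have hb1 : b - 1 + 1 = b := by omega
      rw [htot (b+1) (by omega), htot b (by omega), Nat.add_sub_cancel,
        mul_right_comm, ← pow_succ, hb1]
    obtain ⟨e, he⟩ := hdvd_d
    have hepos : (p^b).totient ≠ 0 := (Nat.totient_pos.mpr (hppos b)).ne'
    have hedvd : e ∣ p := by
      have := hd_dvd
      rw [he, htoteq] at this
      exact (mul_dvd_mul_iff_left hepos).mp this
    rcases (Nat.Prime.eq_one_or_self_of_dvd hp e hedvd) with rfl | rfl
    · exact absurd (by omega : d = (p^b).totient) hne
    · rw [htoteq, he]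

lemma cyclo_irred (n r : ℕ) (hr : r.Prime) (hn : 0 < n) (hrn : ¬ r ∣ n)
    (hord : orderOf (r : ZMod n) = n.totient) :
    Irreducible (cyclotomic n (ZMod r)) := by
  haveI : Fact r.Prime := ⟨hr⟩
  set F := ZMod r
  have htotpos : 0 < n.totient := Nat.totient_pos.mpr hn
  have hdeg : (cyclotomic n F).natDegree = n.totient := natDegree_cyclotomic n F
  obtain ⟨P, hPm, hPirr, hPdvd⟩ := (cyclotomic n F).exists_monic_irreducible_factor
    (not_isUnit_of_natDegree_pos _ (by omega))
  have hP0 : P ≠ 0 := hPm.ne_zero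
  have hle : P.natDegree ≤ n.totient := by
    rw [← hdeg]
    exact natDegree_le_of_dvd hPdvd (cyclotomic_ne_zero n F)
  -- build the field K = F[x]/(P)
  haveI : Fact (Irreducible P) := ⟨hPirr⟩
  set K := AdjoinRoot P with hK
  haveI : Module.Finite F K := (AdjoinRoot.powerBasis hP0).finite
  haveI : Finite K := Module.finite_of_finite F
  letI : Fintype K := Fintype.ofFinite K
  set x := AdjoinRoot.root P with hx
  have hroot : IsRoot (cyclotomic n K) x := by
    obtain ⟨Q, hQ⟩ := hPdvd
    have : (cyclotomic n F).map (algebraMap F K) = (P.map (algebraMap F K)) * (Q.map (algebraMap F K)) := by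
      rw [hQ, Polynomial.map_mul]
    rw [IsRoot, ← map_cyclotomic n (algebraMap F K), this, eval_mul]
    have : (P.map (algebraMap F K)).eval x = 0 := by
      rw [eval_map, AdjoinRoot.algebraMap_eq]
      exact AdjoinRoot.eval₂_root P
    rw [this, zero_mul]
  haveI : NeZero (n : K) := by
    refine ⟨fun h0 => ?_⟩
    have : ((n : F) : K) = 0 := by rw [map_natCast]; exact h0
    have hnF : (n : F) = 0 := by
      apply (algebraMap F K).injective
      rw [map_zero]; exact this
    exact hrn ((ZMod.natCast_eq_zero_iff n r).mp hnF)
  have hxprim : IsPrimitiveRoot x n := (Polynomial.isRoot_cyclotomic_iff).mp hroot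
  -- x is a unit of order n in Kˣ
  have hxu : IsUnit x := (hxprim.isUnit hn.ne')
  obtain ⟨u, hu⟩ := hxu
  have horder : orderOf u = n := by
    rw [← orderOf_units, hu]
    exact hxprim.eq_orderOf.symm
  have hdvd_card : n ∣ Nat.card Kˣ := horder ▸ orderOf_dvd_natCard u
  rw [Nat.card_units, Nat.card_eq_fintype_card] at hdvd_card
  have hcardK : Fintype.card K = r ^ P.natDegree := by
    rw [Module.card_eq_pow_finrank (K := F) (V := K), ZMod.card]
    congr 1
    rw [(AdjoinRoot.powerBasis hP0).finrank]
    rfl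
  rw [hcardK] at hdvd_card
  -- hence r ^ degP ≡ 1 mod n, so totient n = orderOf r ∣ degP
  have hmod : (r : ZMod n) ^ P.natDegree = 1 := by
    have h1le : 1 ≤ r ^ P.natDegree := Nat.one_le_pow _ _ hr.pos
    have : ((r ^ P.natDegree : ℕ) : ZMod n) = ((1 : ℕ) : ZMod n) := by
      rw [ZMod.natCast_eq_natCast_iff]
      exact ((Nat.modEq_iff_dvd' h1le).mpr hdvd_card).symm
    simpa [Nat.cast_pow] using this
  have hdvd2 : n.totient ∣ P.natDegree := hord ▸ orderOf_dvd_of_pow_eq_one hmod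
  have hge : n.totient ≤ P.natDegree := Nat.le_of_dvd hPirr.natDegree_pos hdvd2
  -- conclude
  have heq : cyclotomic n F = P :=
    eq_of_monic_of_dvd_of_natDegree_le hPm (cyclotomic.monic n F) hPdvd (by omega)
  rw [heq]
  exact hPirr

theorem poly_congr_cyclotomic_and_irreducible (ρ b g : ℕ) (hρ : ρ.Prime) (hρ5 : 5 ≤ ρ)
    (hb : 1 ≤ b) (hg : 2 * g = ρ ^ (b - 1) * (ρ - 1)) (r : ℕ) (hr : r.Prime)
    (hprim : orderOf (r : ZMod (ρ ^ 2)) = (ρ ^ 2).totient)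
    (q : ℤ) (hq : 4 ≤ q) (hq1 : q ≡ 1 [ZMOD (r : ℤ)]) (m : ℕ) :
    ((X ^ (2 * g) + C ((m : ℤ) * r + 1) * X ^ g + C (q ^ g) +
        ∑ u ∈ Finset.Icc 1 ((ρ - 3) / 2),
          (X ^ (2 * g - u * ρ ^ (b - 1)) +
            C (q ^ (g - u * ρ ^ (b - 1))) * X ^ (u * ρ ^ (b - 1)))) : Polynomial ℤ).map
        (Int.castRingHom (ZMod r)) = Polynomial.cyclotomic (ρ ^ b) (ZMod r) ∧
    Irreducible
      (((X ^ (2 * g) + C ((m : ℤ) * r + 1) * X ^ g + C (q ^ g) +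
        ∑ u ∈ Finset.Icc 1 ((ρ - 3) / 2),
          (X ^ (2 * g - u * ρ ^ (b - 1)) +
            C (q ^ (g - u * ρ ^ (b - 1))) * X ^ (u * ρ ^ (b - 1)))) : Polynomial ℤ).map
        (Int.castRingHom ℚ)) := by
  haveI : Fact r.Prime := ⟨hr⟩
  have hρ2 : ρ ≠ 2 := by omega
  obtain ⟨h, hρodd⟩ : ∃ h, ρ = 2*h+1 := (hρ.odd_of_ne_two hρ2)
  set k := ρ^(b-1) with hkdef
  have hk1 : 1 ≤ k := Nat.one_le_pow _ _ hρ.pos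
  have hh2 : 2 ≤ h := by omega
  have hgk : g = h * k := by
    have h2 : 2*g = 2*(h*k) := by
      rw [hg, show ρ - 1 = 2*h by omega]; ring
    omega
  have hs3 : (ρ-3)/2 = h - 1 := by omega
  have hg1 : 1 ≤ g := by
    have : 2 ≤ h*k := le_trans hh2 (Nat.le_mul_of_pos_right _ (by omega))
    omega
  -- the congruence part
  have hq' : ((q : ZMod r)) = 1 := by
    have := (ZMod.intCast_eq_intCast_iff q 1 r).mpr hq1
    simpa using this
  have hmap : ((X ^ (2 * g) + C ((m : ℤ) * r + 1) * X ^ g + C (q ^ g) +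
        ∑ u ∈ Finset.Icc 1 ((ρ - 3) / 2),
          (X ^ (2 * g - u * k) +
            C (q ^ (g - u * k)) * X ^ (u * k))) : Polynomial ℤ).map
        (Int.castRingHom (ZMod r)) = Polynomial.cyclotomic (ρ ^ b) (ZMod r) := by
    have hC1 : (Int.castRingHom (ZMod r)) ((m : ℤ) * r + 1) = 1 := by
      simp [ZMod.natCast_self]
    have hCq : ∀ j : ℕ, (Int.castRingHom (ZMod r)) (q ^ j) = 1 := fun j => by
      simp only [map_pow]
      rw [show (Int.castRingHom (ZMod r)) q = (q : ZMod r) from rfl, hq', one_pow]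
    simp only [Polynomial.map_add, Polynomial.map_sum, Polynomial.map_mul,
      Polynomial.map_pow, Polynomial.map_X, Polynomial.map_C, hC1, hCq, C_1, one_mul,
      Polynomial.map_one]
    rw [hs3, hgk, ← mul_assoc 2 h k, key_sum h k (by omega) hk1, ← hρodd,
      show ρ^b = ρ^((b-1)+1) by congr 1; omega,
      cyclotomic_prime_pow_eq_geom_sum hρ]
  constructor
  · exact hmap
  · -- irreducibility
    have hcyc_irr : Irreducible (cyclotomic (ρ ^ b) (ZMod r)) := by
      have hcop : ¬ ρ ∣ r := by
        intro hd
        have hfin : IsOfFinOrder (r : ZMod (ρ^2)) := by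
          rw [← orderOf_pos_iff, hprim]
          exact Nat.totient_pos.mpr (by positivity)
        have hunit : IsUnit (r : ZMod (ρ^2)) := hfin.isUnit
        haveI : NeZero (ρ^2) := ⟨by positivity⟩
        have := (ZMod.isUnit_iff_coprime r (ρ^2)).mp hunit
        have h2 : ρ ∣ ρ^2 := dvd_pow_self ρ two_ne_zero
        have := Nat.eq_one_of_dvd_coprimes this hd h2
        omega
      have hrρ : r ≠ ρ := by
        intro hre; exact hcop (hre ▸ dvd_refl ρ)
      have hrn : ∀ c : ℕ, ¬ r ∣ ρ ^ c := fun c hd =>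
        hrρ ((Nat.prime_dvd_prime_iff_eq hr hρ).mp (hr.dvd_of_dvd_pow hd))
      rcases Nat.lt_or_ge b 2 with hb2 | hb2
      · -- b = 1
        have hb1 : b = 1 := by omega
        subst hb1
        rw [pow_one]
        exact cyclotomic_irreducible_of_irreducible_pow hρ (two_ne_zero)
          (cyclo_irred (ρ^2) r hr (by positivity) (hrn 2) hprim)
      · exact cyclo_irred (ρ^b) r hr (by positivity) (hrn b)
          (order_lift ρ hρ hρ2 r hprim b hb2)
    -- monicity
    set f : Polynomial ℤ := X ^ (2 * g) + C ((m : ℤ) * r + 1) * X ^ g + C (q ^ g) +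
        ∑ u ∈ Finset.Icc 1 ((ρ - 3) / 2),
          (X ^ (2 * g - u * k) + C (q ^ (g - u * k)) * X ^ (u * k)) with hf
    set rest : Polynomial ℤ := C ((m : ℤ) * r + 1) * X ^ g + C (q ^ g) +
        ∑ u ∈ Finset.Icc 1 ((ρ - 3) / 2),
          (X ^ (2 * g - u * k) + C (q ^ (g - u * k)) * X ^ (u * k)) with hrest
    have hfrw : f = X ^ (2*g) + rest := by rw [hf, hrest]; ring
    have hrestdeg : rest.degree < ((2*g : ℕ) : WithBot ℕ) := by
      have hD : ((2*g - 1 : ℕ) : WithBot ℕ) < ((2*g : ℕ) : WithBot ℕ) := by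
        exact_mod_cast (by omega : 2*g - 1 < 2*g)
      refine lt_of_le_of_lt ?_ hD
      rw [hrest]
      refine le_trans (degree_add_le _ _) (max_le (le_trans (degree_add_le _ _)
        (max_le ?_ ?_)) ?_)
      · exact le_trans (degree_C_mul_X_pow_le _ _) (by exact_mod_cast (by omega : g ≤ 2*g - 1))
      · exact le_trans degree_C_le (by exact_mod_cast Nat.zero_le _)
      · refine le_trans (degree_sum_le _ _) (Finset.sup_le fun u hu => ?_)
        rw [Finset.mem_Icc] at hu
        have huk : 1 ≤ u * k := by
          have := Nat.mul_le_mul hu.1 hk1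
          omega
        have hukle : u * k ≤ h * k := Nat.mul_le_mul_right k (by omega)
        refine le_trans (degree_add_le _ _) (max_le ?_ ?_)
        · exact le_trans (degree_X_pow_le _) (by exact_mod_cast (by omega : 2*g - u*k ≤ 2*g - 1))
        · refine le_trans (degree_C_mul_X_pow_le _ _) ?_
          have : u * k ≤ 2*g - 1 := by omega
          exact_mod_cast this
    have hmono : f.Monic := by
      rw [hfrw]
      exact monic_X_pow_add hrestdeg
    have hirrZ : Irreducible f :=
      hmono.irreducible_of_irreducible_map (Int.castRingHom (ZMod r)) f
        (by rw [hf] at hmap ⊢; rw [hmap]; exact hcyc_irr)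
    exact (Polynomial.IsPrimitive.Int.irreducible_iff_irreducible_map_cast
      hmono.isPrimitive).mp hirrZ
end

section
/- Let g ≥ 1 and let f(t) ∈ ℤ[t] be monic of degree 2g, irreducible over ℚ, whose complex zeros all have modulus q^{1/2} where q = p^n for a prime p and n ≥ 1, and suppose f has at least one non-real zero. Then for every zero θ of f, the field ℚ(θ) is a CM field of degree 2g: specifically, θ + q/θ is a real algebraic number all of whose conjugates are real and lie in [−2√q, 2√q], and ℚ(θ) is a totally imaginary quadratic extension of ℚ(θ + q/θ). -/
open Polynomial IntermediateField

set_option maxHeartbeats 1000000 in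
set_option synthInstance.maxHeartbeats 400000 in
theorem weil_aux_deg (g : ℕ) (q : ℚ) (θ α : ℂ) (hαre : α.im = 0) (hθim : θ.im ≠ 0)
    (hquad : θ^2 - α*θ + (q:ℂ) = 0) (hθint : IsIntegral ℚ θ)
    (h2g : (minpoly ℚ θ).natDegree = 2*g) (hαmem : α ∈ ℚ⟮θ⟯) :
    (minpoly ℚ α).natDegree = g := by
  haveI hfinE : FiniteDimensional ℚ ℚ⟮θ⟯ := adjoin.finiteDimensional hθint
  have hθmem : θ ∈ ℚ⟮θ⟯ := mem_adjoin_simple_self ℚ θ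
  have hαint : IsIntegral ℚ α := by
    have h := IsIntegral.of_finite ℚ (⟨α, hαmem⟩ : ℚ⟮θ⟯)
    have : algebraMap ℚ⟮θ⟯ ℂ ⟨α, hαmem⟩ = α := rfl
    rw [← this]
    exact h.algebraMap
  have hKreal : ∀ x : ℂ, x ∈ ℚ⟮α⟯ → x.im = 0 := by
    intro x hx
    induction hx using IntermediateField.adjoin_induction with
    | mem y hy => rw [Set.mem_singleton_iff] at hy; subst hy; exact hαre
    | algebraMap r => simp
    | add a b _ _ ha hb => simp [Complex.add_im, ha, hb]
    | inv a _ ha => simp [Complex.inv_im, ha]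
    | mul a b _ _ ha hb => simp [Complex.mul_im, ha, hb]
  have hθnot : θ ∉ (algebraMap ℚ⟮α⟯ ℂ).range := by
    rintro ⟨x, hx⟩
    exact hθim (by rw [← hx]; exact hKreal _ x.2)
  let P : Polynomial ℚ⟮α⟯ := X^2 - C (AdjoinSimple.gen ℚ α) * X + C (q : ℚ⟮α⟯)
  have hPmonic : P.Monic := by unfold P; monicity!
  have hPeval : aeval θ P = 0 := by
    simp only [P, map_add, map_sub, map_pow, map_mul, aeval_X, aeval_C]
    rw [show algebraMap ℚ⟮α⟯ ℂ (AdjoinSimple.gen ℚ α) = α from rfl, map_ratCast]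
    exact hquad
  have hθK : IsIntegral ℚ⟮α⟯ θ := ⟨P, hPmonic, by rwa [← Polynomial.aeval_def]⟩
  have hminK2 : (minpoly ℚ⟮α⟯ θ).natDegree = 2 := by
    have hle : (minpoly ℚ⟮α⟯ θ).natDegree ≤ 2 := by
      have := Polynomial.natDegree_le_of_dvd (minpoly.dvd _ _ hPeval) hPmonic.ne_zero
      have hP2 : P.natDegree = 2 := by unfold P; compute_degree!
      omega
    have hge := (minpoly.two_le_natDegree_iff hθK).mpr hθnot
    omega
  have hr1 : Module.finrank ℚ ℚ⟮θ⟯ = 2*g := by rw [adjoin.finrank hθint, h2g]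
  haveI : FiniteDimensional ℚ⟮α⟯ ℚ⟮α⟯⟮θ⟯ := adjoin.finiteDimensional hθK
  have hr2 : Module.finrank ℚ⟮α⟯ ℚ⟮α⟯⟮θ⟯ = 2 := by rw [adjoin.finrank hθK, hminK2]
  have hres : (IntermediateField.adjoin ℚ⟮α⟯ {θ}).restrictScalars ℚ = ℚ⟮θ⟯ := by
    erw [adjoin_adjoin_left]
    apply le_antisymm
    · rw [adjoin_le_iff]
      rintro x (rfl | rfl)
      · exact hαmem
      · exact hθmem
    · exact adjoin.mono ℚ _ _ Set.subset_union_right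
  have htower := Module.finrank_mul_finrank ℚ ℚ⟮α⟯ ℚ⟮α⟯⟮θ⟯
  have hres' : Module.finrank ℚ ((IntermediateField.adjoin ℚ⟮α⟯ {θ}).restrictScalars ℚ) =
      Module.finrank ℚ ℚ⟮α⟯⟮θ⟯ := rfl
  rw [hr2, ← hres', hres, hr1] at htower
  have hfr : Module.finrank ℚ ℚ⟮α⟯ = (minpoly ℚ α).natDegree := adjoin.finrank hαint
  omega


theorem weil_poly_gives_CM_field (g : ℕ) (hg : 1 ≤ g) (p n : ℕ) (hp : p.Prime) (hn : 1 ≤ n)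
    (q : ℕ) (hq : q = p ^ n) (f : Polynomial ℤ) (hmonic : f.Monic)
    (hdeg : f.natDegree = 2 * g) (hirr : Irreducible (f.map (Int.castRingHom ℚ)))
    (hmod : ∀ z : ℂ, Polynomial.aeval z f = 0 → ‖z‖ = Real.sqrt q)
    (hnonreal : ∃ z : ℂ, Polynomial.aeval z f = 0 ∧ z.im ≠ 0) :
    ∀ θ : ℂ, Polynomial.aeval θ f = 0 →
      (θ + q / θ).im = 0 ∧
      (minpoly ℚ (θ + q / θ)).natDegree = g ∧
      (∀ z : ℂ, Polynomial.aeval z (minpoly ℚ (θ + q / θ)) = 0 →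
        z.im = 0 ∧ |z.re| ≤ 2 * Real.sqrt q) ∧
      (minpoly ℚ θ).natDegree = 2 * g ∧
      (∀ z : ℂ, Polynomial.aeval z (minpoly ℚ θ) = 0 → z.im ≠ 0) := by
  have hq2 : 2 ≤ q := by
    subst hq
    calc 2 ≤ p := hp.two_le
    _ ≤ p ^ n := Nat.le_self_pow (by omega) p
  have hqR : (0:ℝ) < q := by exact_mod_cast (by omega : 0 < q)
  have hsq : 0 < Real.sqrt q := Real.sqrt_pos.mpr hqR
  have hfm : (f.map (Int.castRingHom ℚ)).Monic := hmonic.map _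
  have hfmdeg : (f.map (Int.castRingHom ℚ)).natDegree = 2*g := by
    rw [show (Int.castRingHom ℚ) = algebraMap ℤ ℚ from rfl, hmonic.natDegree_map]; exact hdeg
  have haev : ∀ z : ℂ, aeval z (f.map (Int.castRingHom ℚ)) = aeval z f := by
    intro z
    rw [show (Int.castRingHom ℚ) = algebraMap ℤ ℚ from rfl, aeval_map_algebraMap]
  have hminf : ∀ z : ℂ, aeval z f = 0 → minpoly ℚ z = f.map (Int.castRingHom ℚ) := fun z hz =>
    (minpoly.eq_of_irreducible_of_monic hirr (by rwa [haev]) hfm).symm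
  have hne0 : ∀ z : ℂ, aeval z f = 0 → z ≠ 0 := by
    intro z hz h0
    have h := hmod z hz
    rw [h0, norm_zero] at h
    exact absurd h.symm (ne_of_gt hsq)
  have hnormsq : ∀ z : ℂ, aeval z f = 0 → z * (starRingEnd ℂ) z = (q:ℂ) := by
    intro z hz
    rw [Complex.mul_conj]
    norm_cast
    rw [← Complex.sq_norm, hmod z hz, Real.sq_sqrt hqR.le]
  have hdivconj : ∀ z : ℂ, aeval z f = 0 → (q:ℂ)/z = (starRingEnd ℂ) z := by
    intro z hz
    rw [div_eq_iff (hne0 z hz), ← hnormsq z hz, mul_comm]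
  have key5 : ∀ z : ℂ, aeval z f = 0 → z.im ≠ 0 := by
    intro z hz him
    have hzre : z = (z.re:ℂ) := Complex.ext rfl (by simp [him])
    have hre2 : z.re^2 = (q:ℝ) := by
      have h := hmod z hz
      rw [hzre, Complex.norm_real, Real.norm_eq_abs] at h
      rw [← sq_abs, h, Real.sq_sqrt hqR.le]
    have hroot : aeval z ((X:ℚ[X])^2 - C (q:ℚ)) = 0 := by
      simp only [map_sub, map_pow, aeval_X, aeval_C]
      rw [hzre]
      push_cast
      rw [← Complex.ofReal_pow, hre2]
      push_cast
      ring
    have hdvd : f.map (Int.castRingHom ℚ) ∣ ((X:ℚ[X])^2 - C (q:ℚ)) :=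
      (hminf z hz) ▸ minpoly.dvd ℚ z hroot
    have hmq : ((X:ℚ[X])^2 - C (q:ℚ)).Monic := monic_X_pow_sub_C _ (by norm_num)
    have heq : (X:ℚ[X])^2 - C (q:ℚ) = f.map (Int.castRingHom ℚ) :=
      Polynomial.eq_of_monic_of_dvd_of_natDegree_le hfm hmq hdvd
        (by rw [natDegree_X_pow_sub_C, hfmdeg]; omega)
    obtain ⟨w, hw, hwim⟩ := hnonreal
    have hw0 : aeval w ((X:ℚ[X])^2 - C (q:ℚ)) = 0 := by rw [heq, haev]; exact hw
    have hw2 : w^2 = (q:ℂ) := by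
      simpa [sub_eq_zero] using hw0
    have h1 : (w^2).im = 0 := by rw [hw2]; simp
    have h2 : w.re = 0 := by
      rw [pow_two, Complex.mul_im] at h1
      rcases mul_eq_zero.mp (by linarith : w.re * w.im = 0) with h | h
      · exact h
      · exact absurd h hwim
    have h3 : (w^2).re = (q:ℝ) := by rw [hw2]; simp
    rw [pow_two, Complex.mul_re, h2] at h3
    nlinarith [sq_nonneg w.im, (by positivity : (0:ℝ) < (q:ℝ))]
  intro θ hθ
  have hθ0 : θ ≠ 0 := hne0 θ hθ
  have hα : θ + (q:ℂ)/θ = θ + (starRingEnd ℂ) θ := by rw [hdivconj θ hθ]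
  have hθint : IsIntegral ℚ θ := ⟨f.map (Int.castRingHom ℚ), hfm, by
    rw [← Polynomial.aeval_def, haev]; exact hθ⟩
  haveI hfinE : FiniteDimensional ℚ ℚ⟮θ⟯ := adjoin.finiteDimensional hθint
  haveI : Algebra.IsAlgebraic ℚ ℚ⟮θ⟯ := Algebra.IsAlgebraic.of_finite _ _
  have hθmem : θ ∈ ℚ⟮θ⟯ := mem_adjoin_simple_self ℚ θ
  have hαmem : θ + (q:ℂ)/θ ∈ ℚ⟮θ⟯ := by
    refine add_mem hθmem (div_mem ?_ hθmem)
    exact_mod_cast _root_.natCast_mem ℚ⟮θ⟯ q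
  set αE : ℚ⟮θ⟯ := ⟨θ + (q:ℂ)/θ, hαmem⟩ with hαE
  have hmapα : algebraMap ℚ⟮θ⟯ ℂ αE = θ + (q:ℂ)/θ := rfl
  have hminαE : minpoly ℚ αE = minpoly ℚ (θ + (q:ℂ)/θ) := by
    rw [← hmapα, minpoly.algebraMap_eq (algebraMap ℚ⟮θ⟯ ℂ).injective]
  have hαEint : IsIntegral ℚ αE := IsIntegral.of_finite ℚ αE
  have hαint : IsIntegral ℚ (θ + (q:ℂ)/θ) := by
    rw [← hmapα]
    exact hαEint.algebraMap
  have hgen : algebraMap ℚ⟮θ⟯ ℂ (AdjoinSimple.gen ℚ θ) = θ := rfl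
  have hgenroot : aeval (AdjoinSimple.gen ℚ θ) f = 0 := by
    apply (algebraMap ℚ⟮θ⟯ ℂ).injective
    rw [map_zero, ← Polynomial.aeval_algebraMap_apply, hgen]
    exact hθ
  refine ⟨by rw [hα]; simp, ?_, ?_, ?_, ?_⟩
  · refine weil_aux_deg g (q:ℚ) θ (θ + (q:ℂ)/θ) (by rw [hα]; simp) (key5 θ hθ) ?_ hθint
      (by rw [hminf θ hθ]; exact hfmdeg) hαmem
    push_cast
    field_simp
    ring
  · -- conjugates of α
    intro z hz
    have hzrs : z ∈ (minpoly ℚ αE).rootSet ℂ := by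
      rw [Polynomial.mem_rootSet, hminαE]
      exact ⟨minpoly.ne_zero hαint, hz⟩
    rw [← Algebra.IsAlgebraic.range_eval_eq_rootSet_minpoly ℂ αE] at hzrs
    obtain ⟨ψ, hψ⟩ := hzrs
    set θ' := ψ (AdjoinSimple.gen ℚ θ) with hθ'
    have hψ' : ψ αE = z := hψ
    have hθ'root : aeval θ' f = 0 := by
      show aeval ((ψ.restrictScalars ℤ) (AdjoinSimple.gen ℚ θ)) f = 0
      rw [Polynomial.aeval_algHom_apply, hgenroot, map_zero]
    have hαgen : αE = AdjoinSimple.gen ℚ θ + (q:ℚ⟮θ⟯)/(AdjoinSimple.gen ℚ θ) := by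
      apply Subtype.ext
      push_cast
      rfl
    have hz' : z = θ' + (q:ℂ)/θ' := by
      rw [← hψ', hαgen, map_add, map_div₀, map_natCast]
    have hconj := hdivconj θ' hθ'root
    rw [hz', hconj]
    constructor
    · simp
    · have habs := hmod θ' hθ'root
      have hre : ((θ' + (starRingEnd ℂ) θ').re) = 2 * θ'.re := by
        simp [Complex.add_re, Complex.conj_re]; ring
      rw [hre, abs_mul, abs_two]
      have := Complex.abs_re_le_norm θ'
      rw [habs] at this
      nlinarith [abs_nonneg θ'.re]
  · rw [hminf θ hθ]; exact hfmdeg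
  · intro z hz
    rw [hminf θ hθ, haev] at hz
    exact key5 z hz
end
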